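/- arXiv:2010.01561 — 4 statements merged into one kernel-verified Lean document; each statement's English description precedes it below -/
import Mathlib

section
/- Let 1 < p < ∞ and λ = 0. Suppose r : [0,π_p] → ℝ is continuous and the boundary value problem (|u′|^{p−2}u′)′ + r(x)|u|^{p−2}u = 0 on (0,π_p), u(0) = u(π_p) = 0, has a nontrivial solution. Then ∫₀^{π_p} r_+(x) dx > 2^p / π_p^{p−1}. -/
open Set MeasureTheory intervalIntegral Real

/-- The generalized π: `π_p = 2 ∫₀¹ (1 - tᵖ)^(-1/p) dt`. -/
noncomputable def piP (p : ℝ) : ℝ := 2 * ∫ t in (0:ℝ)..1, (1 - t ^ p) ^ (-(1 / p))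

/-- `u` (with continuous derivative `u'` on `[0, π_p]`) is a nontrivial solution of
`(|u'|^(p-2) u')' + (λ + r x) |u|^(p-2) u = 0` on `(0, π_p)` with `u 0 = u π_p = 0`. -/
def IsNontrivialSolution (p lam : ℝ) (r u u' : ℝ → ℝ) : Prop :=
  (∃ x ∈ Set.Icc (0:ℝ) (piP p), u x ≠ 0) ∧
  ContinuousOn u' (Set.Icc 0 (piP p)) ∧
  (∀ x ∈ Set.Icc (0:ℝ) (piP p), HasDerivWithinAt u (u' x) (Set.Icc 0 (piP p)) x) ∧
  u 0 = 0 ∧ u (piP p) = 0 ∧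
  ∀ x ∈ Set.Ioo (0:ℝ) (piP p),
    HasDerivAt (fun y => |u' y| ^ (p - 2) * u' y)
      (-((lam + r x) * |u x| ^ (p - 2) * u x)) x

lemma piP_integrable {p : ℝ} (hp : 1 < p) :
    IntervalIntegrable (fun t : ℝ => (1 - t ^ p) ^ (-(1/p))) volume 0 1 := by
  have h1 : IntervalIntegrable (fun t : ℝ => t ^ (-(1/p))) volume 0 1 :=
    intervalIntegrable_rpow' (by
      have : 1/p < 1 := by
        rw [div_lt_one (by linarith)]; linarith
      linarith)
  have h2 : IntervalIntegrable (fun t : ℝ => (1 - t) ^ (-(1/p))) volume 0 1 := by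
    have := (h1.comp_sub_left 1).symm
    simpa using this
  rw [intervalIntegrable_iff_integrableOn_Ioo_of_le (by norm_num)] at h2 ⊢
  refine h2.mono' ?_ ?_
  · refine ContinuousOn.aestronglyMeasurable ?_ measurableSet_Ioo
    refine ContinuousOn.rpow_const ?_ ?_
    · exact (continuousOn_const.sub ((continuousOn_id).rpow_const
        (fun x hx => Or.inl (ne_of_gt hx.1))))
    · intro t ht
      left
      have : t ^ p < 1 := Real.rpow_lt_one (le_of_lt ht.1) ht.2 (by linarith)
      exact ne_of_gt (by linarith)
  · filter_upwards [ae_restrict_mem measurableSet_Ioo] with t ht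
    have ht0 : (0:ℝ) < t := ht.1
    have ht1 : t < 1 := ht.2
    have htp : t ^ p ≤ t := by
      simpa using Real.rpow_le_rpow_of_exponent_ge ht0 ht1.le (le_of_lt hp)
    have htp0 : 0 < t ^ p := Real.rpow_pos_of_pos ht0 p
    have h1t : 0 < 1 - t := by linarith
    have hle : 1 - t ≤ 1 - t ^ p := by linarith
    rw [Real.norm_of_nonneg (Real.rpow_nonneg (by linarith) _)]
    exact Real.rpow_le_rpow_of_nonpos h1t hle (neg_nonpos.mpr (by positivity))

lemma piP_pos {p : ℝ} (hp : 1 < p) : 0 < piP p := by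
  have h := piP_integrable hp
  have : 0 < ∫ t in (0:ℝ)..1, (1 - t ^ p) ^ (-(1/p)) := by
    apply intervalIntegral.intervalIntegral_pos_of_pos_on h ?_ (by norm_num)
    intro t ht
    have htp : t ^ p < 1 := Real.rpow_lt_one (le_of_lt ht.1) ht.2 (by linarith)
    exact Real.rpow_pos_of_pos (by linarith) _
  unfold piP
  linarith

lemma phi_mul_abs {p : ℝ} {t : ℝ} (ht : t ≠ 0) :
    |t| ^ (p-2) * |t| = |t| ^ (p-1) := by
  rw [← Real.rpow_add_one (abs_ne_zero.mpr ht) (p-2)]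
  ring_nf

lemma phi_mul_self {p : ℝ} (hp : 1 < p) (t : ℝ) : |t| ^ (p-2) * t * t = |t| ^ p := by
  rcases eq_or_ne t 0 with rfl | ht
  · simp [Real.zero_rpow (by linarith : p ≠ 0)]
  · have h2 : t * t = |t| * |t| := by
      rcases abs_cases t with ⟨h, _⟩ | ⟨h, _⟩ <;> rw [h] <;> ring
    calc |t| ^ (p-2) * t * t = |t| ^ (p-2) * |t| * |t| := by rw [mul_assoc, h2, mul_assoc]
    _ = |t| ^ (p-1) * |t| := by rw [phi_mul_abs ht]
    _ = |t| ^ p := by rw [← Real.rpow_add_one (abs_ne_zero.mpr ht) (p-1)]; ring_nf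

lemma phi_abs_le {p : ℝ} (hp : 1 < p) (t : ℝ) : |(|t| ^ (p-2) * t)| ≤ |t| ^ (p-1) := by
  rcases eq_or_ne t 0 with rfl | ht
  · simp only [abs_zero, mul_zero, abs_zero]
    exact Real.rpow_nonneg le_rfl _
  · rw [abs_mul, abs_of_nonneg (Real.rpow_nonneg (abs_nonneg t) _), phi_mul_abs ht]

lemma phi_continuous {p : ℝ} (hp : 1 < p) : Continuous (fun t : ℝ => |t| ^ (p-2) * t) := by
  rw [continuous_iff_continuousAt]
  intro t
  rcases eq_or_ne t 0 with rfl | ht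
  · have h0 : |(0:ℝ)| ^ (p-2) * (0:ℝ) = 0 := by simp
    rw [ContinuousAt, h0]
    apply squeeze_zero_norm (f := fun t : ℝ => |t| ^ (p-2) * t) (a := fun t : ℝ => |t| ^ (p-1))
    · intro s
      rw [Real.norm_eq_abs]
      exact phi_abs_le hp s
    · have hc : Continuous (fun t : ℝ => |t| ^ (p-1)) :=
        continuous_abs.rpow_const (fun x => Or.inr (by linarith))
      have := hc.continuousAt (x := 0)
      rwa [ContinuousAt, abs_zero, Real.zero_rpow (by intro h; linarith : p - 1 ≠ 0)] at this
  · exact (((continuous_abs.continuousAt).rpow_const (Or.inl (abs_ne_zero.mpr ht))).mul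
      continuousAt_id)

lemma holder_interval {p q a b : ℝ} (hpq : p.HolderConjugate q) (hab : a ≤ b)
    {f : ℝ → ℝ} (hf : ContinuousOn f (Set.Icc a b)) (hf0 : ∀ x ∈ Set.Icc a b, 0 ≤ f x) :
    ∫ x in a..b, f x ≤ (∫ x in a..b, f x ^ p) ^ (1/p) * (b - a) ^ (1/q) := by
  set μ := volume.restrict (Set.Ioc a b) with hμ
  haveI : IsFiniteMeasure μ := by
    constructor
    rw [hμ, Measure.restrict_apply_univ, Real.volume_Ioc]
    exact ENNReal.ofReal_lt_top
  have hmeas : AEStronglyMeasurable f μ :=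
    (hf.mono Set.Ioc_subset_Icc_self).aestronglyMeasurable measurableSet_Ioc
  obtain ⟨C, hC⟩ := isCompact_Icc.exists_bound_of_continuousOn hf
  have hfmem : MemLp f (ENNReal.ofReal p) μ := by
    apply MemLp.of_bound hmeas C
    filter_upwards [ae_restrict_mem measurableSet_Ioc] with x hx
    exact hC x (Set.Ioc_subset_Icc_self hx)
  have hgmem : MemLp (fun _ : ℝ => (1:ℝ)) (ENNReal.ofReal q) μ := memLp_const 1
  have hf0' : 0 ≤ᵐ[μ] f := by
    filter_upwards [ae_restrict_mem measurableSet_Ioc] with x hx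
    exact hf0 x (Set.Ioc_subset_Icc_self hx)
  have hg0' : 0 ≤ᵐ[μ] (fun _ : ℝ => (1:ℝ)) := Filter.Eventually.of_forall (fun _ => zero_le_one)
  have h := integral_mul_le_Lp_mul_Lq_of_nonneg hpq hf0' hg0' hfmem hgmem
  simp only [mul_one, Real.one_rpow] at h
  have hμuniv : (μ Set.univ).toReal = b - a := by
    rw [hμ, Measure.restrict_apply_univ, Real.volume_Ioc, ENNReal.toReal_ofReal (by linarith)]
  rw [MeasureTheory.integral_const, smul_eq_mul, mul_one, measureReal_def, hμuniv] at h
  rw [intervalIntegral.integral_of_le hab, intervalIntegral.integral_of_le hab]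
  exact h

lemma holder_pow {p : ℝ} (hp : 1 < p) {a b : ℝ} (hab : a ≤ b)
    {f : ℝ → ℝ} (hf : ContinuousOn f (Set.Icc a b)) (hf0 : ∀ x ∈ Set.Icc a b, 0 ≤ f x) :
    (∫ x in a..b, f x) ^ p ≤ (b - a) ^ (p-1) * ∫ x in a..b, f x ^ p := by
  have hp0 : (0:ℝ) < p := by linarith
  have hq : p.HolderConjugate (p / (p-1)) :=
    (Real.holderConjugate_iff_eq_conjExponent hp).2 rfl
  have h := holder_interval hq hab hf hf0
  have hA : 0 ≤ ∫ x in a..b, f x := intervalIntegral.integral_nonneg hab hf0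
  have hB : 0 ≤ ∫ x in a..b, f x ^ p := by
    apply intervalIntegral.integral_nonneg hab
    intro x hx
    exact Real.rpow_nonneg (hf0 x hx) p
  have hba : (0:ℝ) ≤ b - a := by linarith
  calc (∫ x in a..b, f x) ^ p
      ≤ ((∫ x in a..b, f x ^ p) ^ (1/p) * (b - a) ^ (1/(p/(p-1)))) ^ p := by
        apply Real.rpow_le_rpow hA h (le_of_lt hp0)
    _ = (b - a) ^ (p-1) * ∫ x in a..b, f x ^ p := by
        rw [Real.mul_rpow (Real.rpow_nonneg hB _) (Real.rpow_nonneg hba _),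
          ← Real.rpow_mul hB, ← Real.rpow_mul hba,
          one_div_mul_cancel (ne_of_gt hp0), Real.rpow_one,
          show 1 / (p / (p-1)) * p = p - 1 by field_simp]
        ring

lemma abs_int_pow {p : ℝ} (hp : 1 < p) {a b : ℝ} (hab : a ≤ b)
    {f : ℝ → ℝ} (hf : ContinuousOn f (Set.Icc a b)) :
    |∫ x in a..b, f x| ^ p ≤ (b - a) ^ (p-1) * ∫ x in a..b, |f x| ^ p := by
  have h1 : |∫ x in a..b, f x| ≤ ∫ x in a..b, |f x| :=
    intervalIntegral.abs_integral_le_integral_abs hab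
  have h2 := holder_pow hp hab hf.abs (fun x _ => abs_nonneg _)
  exact le_trans (Real.rpow_le_rpow (abs_nonneg _) h1 (by linarith)) h2

lemma amgm_aux {a b s : ℝ} (ha : 0 < a) (hb : 0 < b) (hs : 0 < s) :
    2 ^ (s+1) / (a+b) ^ s ≤ 1 / a ^ s + 1 / b ^ s := by
  have hab : 0 < a + b := by linarith
  set A := a ^ (-(s/2)) with hA
  set B := b ^ (-(s/2)) with hB
  have hA2 : A * A = 1 / a ^ s := by
    rw [hA, ← Real.rpow_add ha, show -(s/2) + -(s/2) = -s by ring,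
      Real.rpow_neg ha.le, one_div]
  have hB2 : B * B = 1 / b ^ s := by
    rw [hB, ← Real.rpow_add hb, show -(s/2) + -(s/2) = -s by ring,
      Real.rpow_neg hb.le, one_div]
  have hABmul : A * B = (a * b) ^ (-(s/2)) := by
    rw [hA, hB, Real.mul_rpow ha.le hb.le]
  have hsq : a * b ≤ ((a+b)/2) ^ (2:ℝ) := by
    rw [show ((a+b)/2) ^ (2:ℝ) = ((a+b)/2) ^ (2:ℕ) by
      rw [← Real.rpow_natCast ((a+b)/2) 2]; norm_num]
    nlinarith [sq_nonneg (a - b)]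
  have hAB : ((a+b)/2) ^ (-s) ≤ A * B := by
    rw [hABmul, show -s = (2:ℝ) * (-(s/2)) by ring,
      Real.rpow_mul (by linarith : (0:ℝ) ≤ (a+b)/2)]
    exact Real.rpow_le_rpow_of_nonpos (mul_pos ha hb) hsq (by linarith)
  have hhalf : ((a+b)/2) ^ (-s) = 2 ^ s / (a+b) ^ s := by
    rw [Real.rpow_neg (by linarith : (0:ℝ) ≤ (a+b)/2),
      Real.div_rpow hab.le (by norm_num : (0:ℝ) ≤ 2)]
    rw [inv_div]
  have h2s : (2:ℝ) ^ (s+1) = 2 * 2 ^ s := by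
    rw [Real.rpow_add (by norm_num : (0:ℝ) < 2), Real.rpow_one]; ring
  have hamgm : 2 * (A * B) ≤ A * A + B * B := by nlinarith [sq_nonneg (A - B)]
  calc 2 ^ (s+1) / (a+b) ^ s = 2 * (2 ^ s / (a+b) ^ s) := by rw [h2s]; ring
    _ = 2 * ((a+b)/2) ^ (-s) := by rw [hhalf]
    _ ≤ 2 * (A * B) := by linarith
    _ ≤ A * A + B * B := hamgm
    _ = 1 / a ^ s + 1 / b ^ s := by rw [hA2, hB2]

section aux
variable {p L : ℝ} {u u' r : ℝ → ℝ}

lemma ftc_aux (hu'c : ContinuousOn u' (Icc 0 L))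
    (hderiv : ∀ x ∈ Icc (0:ℝ) L, HasDerivWithinAt u (u' x) (Icc 0 L) x)
    {x y : ℝ} (hx : 0 ≤ x) (hxy : x ≤ y) (hyL : y ≤ L) :
    ∫ t in x..y, u' t = u y - u x := by
  apply intervalIntegral.integral_eq_sub_of_hasDeriv_right_of_le hxy
  · intro t ht
    exact ((hderiv t ⟨le_trans hx ht.1, le_trans ht.2 hyL⟩).continuousWithinAt).mono
      (Icc_subset_Icc hx hyL)
  · intro t ht
    have htL : t ∈ Ioo (0:ℝ) L := ⟨lt_of_le_of_lt hx ht.1, lt_of_lt_of_le ht.2 hyL⟩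
    exact ((hderiv t (Ioo_subset_Icc_self htL)).hasDerivAt
      (Icc_mem_nhds htL.1 htL.2)).hasDerivWithinAt
  · apply ContinuousOn.intervalIntegrable
    rw [uIcc_of_le hxy]
    exact hu'c.mono (Icc_subset_Icc hx hyL)

lemma ibp_aux (hp : 1 < p)
    (hu'c : ContinuousOn u' (Icc 0 L))
    (hderiv : ∀ x ∈ Icc (0:ℝ) L, HasDerivWithinAt u (u' x) (Icc 0 L) x)
    (hrc : ContinuousOn r (Icc 0 L))
    (hode : ∀ x ∈ Ioo (0:ℝ) L,
      HasDerivAt (fun y => |u' y| ^ (p - 2) * u' y)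
        (-((0 + r x) * |u x| ^ (p - 2) * u x)) x)
    (hu0 : u 0 = 0)
    {b : ℝ} (hb0 : 0 ≤ b) (hbL : b ≤ L) :
    ∫ t in (0:ℝ)..b, |u' t| ^ p
      = (|u' b| ^ (p-2) * u' b) * u b + ∫ t in (0:ℝ)..b, r t * |u t| ^ p := by
  have hu_cont : ContinuousOn u (Icc 0 L) := fun x hx => (hderiv x hx).continuousWithinAt
  have hw_cont : ContinuousOn (fun x => (|u' x| ^ (p-2) * u' x) * u x) (Icc 0 L) :=
    ((phi_continuous hp).comp_continuousOn hu'c).mul hu_cont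
  have hup_cont : ContinuousOn (fun t => |u' t| ^ p) (Icc 0 L) :=
    hu'c.abs.rpow_const (fun x _ => Or.inr (by linarith))
  have hrup_cont : ContinuousOn (fun t => r t * |u t| ^ p) (Icc 0 L) :=
    hrc.mul (hu_cont.abs.rpow_const (fun x _ => Or.inr (by linarith)))
  have hsub : Icc (0:ℝ) b ⊆ Icc 0 L := Icc_subset_Icc le_rfl hbL
  have hginteg : IntervalIntegrable (fun t => |u' t| ^ p - r t * |u t| ^ p) volume 0 b := by
    apply ContinuousOn.intervalIntegrable
    rw [uIcc_of_le hb0]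
    exact (hup_cont.mono hsub).sub (hrup_cont.mono hsub)
  have key : ∀ t ∈ Ioo (0:ℝ) b,
      HasDerivWithinAt (fun x => (|u' x| ^ (p-2) * u' x) * u x)
        (|u' t| ^ p - r t * |u t| ^ p) (Ioi t) t := by
    intro t ht
    have htL : t ∈ Ioo (0:ℝ) L := ⟨ht.1, lt_of_lt_of_le ht.2 hbL⟩
    have h2 : HasDerivAt u (u' t) t :=
      (hderiv t (Ioo_subset_Icc_self htL)).hasDerivAt (Icc_mem_nhds htL.1 htL.2)
    have h3 := (hode t htL).mul h2
    have heq : -((0 + r t) * |u t| ^ (p-2) * u t) * u t + (|u' t| ^ (p-2) * u' t) * u' t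
        = |u' t| ^ p - r t * |u t| ^ p := by
      have e1 := phi_mul_self hp (u t)
      have e2 := phi_mul_self hp (u' t)
      calc -((0 + r t) * |u t| ^ (p-2) * u t) * u t + (|u' t| ^ (p-2) * u' t) * u' t
          = (|u' t| ^ (p-2) * u' t * u' t) - r t * (|u t| ^ (p-2) * u t * u t) := by ring
        _ = |u' t| ^ p - r t * |u t| ^ p := by rw [e1, e2]
    exact (heq ▸ h3).hasDerivWithinAt
  have hftc := intervalIntegral.integral_eq_sub_of_hasDeriv_right_of_le hb0
    (hw_cont.mono hsub) key hginteg
  rw [hu0, mul_zero, sub_zero] at hftc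
  have hint1 : IntervalIntegrable (fun t => |u' t| ^ p) volume 0 b := by
    apply ContinuousOn.intervalIntegrable
    rw [uIcc_of_le hb0]; exact hup_cont.mono hsub
  have hint2 : IntervalIntegrable (fun t => r t * |u t| ^ p) volume 0 b := by
    apply ContinuousOn.intervalIntegrable
    rw [uIcc_of_le hb0]; exact hrup_cont.mono hsub
  rw [intervalIntegral.integral_sub hint1 hint2] at hftc
  linarith

end aux

/-- Lyapunov inequality for `λ = 0`: if `(|u'|^(p-2)u')' + r(x)|u|^(p-2)u = 0`,
`u(0) = u(π_p) = 0` has a nontrivial solution, then `∫₀^{π_p} r₊ > 2^p / π_p^(p-1)`. -/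
theorem lyapunov_zero_lambda (p : ℝ) (hp : 1 < p)
    (r u u' : ℝ → ℝ) (hr : ContinuousOn r (Set.Icc 0 (piP p)))
    (hsol : IsNontrivialSolution p 0 r u u') :
    (∫ x in (0:ℝ)..piP p, max (r x) 0) > 2 ^ p / piP p ^ (p - 1) := by
  obtain ⟨⟨x₀, hx₀, hux₀⟩, hu'c, hderiv, hu0, huL, hode⟩ := hsol
  set L := piP p with hLdef
  have hL : 0 < L := piP_pos hp
  have hp0 : (0:ℝ) < p := by linarith
  have hs0 : (0:ℝ) < p - 1 := by linarith
  have hu_cont : ContinuousOn u (Icc 0 L) := fun x hx => (hderiv x hx).continuousWithinAt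
  -- continuity facts
  have hup_cont : ContinuousOn (fun t => |u' t| ^ p) (Icc 0 L) :=
    hu'c.abs.rpow_const (fun x _ => Or.inr (by linarith))
  have huup_cont : ContinuousOn (fun t => |u t| ^ p) (Icc 0 L) :=
    hu_cont.abs.rpow_const (fun x _ => Or.inr (by linarith))
  have hrup_cont : ContinuousOn (fun t => r t * |u t| ^ p) (Icc 0 L) := hr.mul huup_cont
  have hrp_cont : ContinuousOn (fun t => max (r t) 0) (Icc 0 L) := hr.sup continuousOn_const
  have hrpu_cont : ContinuousOn (fun t => max (r t) 0 * |u t| ^ p) (Icc 0 L) :=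
    hrp_cont.mul huup_cont
  have hintOf : ∀ {f : ℝ → ℝ}, ContinuousOn f (Icc 0 L) → ∀ {x y : ℝ},
      x ∈ Icc (0:ℝ) L → y ∈ Icc (0:ℝ) L → IntervalIntegrable f volume x y := by
    intro f hf x y hx hy
    apply ContinuousOn.intervalIntegrable
    exact hf.mono (uIcc_subset_Icc hx hy)
  -- max point
  obtain ⟨c, hcmem, hcmax⟩ := isCompact_Icc.exists_isMaxOn (nonempty_Icc.mpr hL.le) hu_cont.abs
  set M := |u c| with hMdef
  have hMx : ∀ x ∈ Icc (0:ℝ) L, |u x| ≤ M := fun x hx => hcmax hx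
  have hM0 : 0 < M := lt_of_lt_of_le (abs_pos.mpr hux₀) (hMx x₀ hx₀)
  have hMp0 : 0 < M ^ p := Real.rpow_pos_of_pos hM0 p
  have hc0 : 0 < c := by
    rcases hcmem.1.lt_or_eq with h | h
    · exact h
    · exfalso; rw [hMdef, ← h, hu0, abs_zero] at hM0; exact lt_irrefl 0 hM0
  have hcL : c < L := by
    rcases hcmem.2.lt_or_eq with h | h
    · exact h
    · exfalso; rw [hMdef, h, huL, abs_zero] at hM0; exact lt_irrefl 0 hM0
  -- FTC
  have hftc : ∀ y ∈ Icc (0:ℝ) L, ∫ t in (0:ℝ)..y, u' t = u y := by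
    intro y hy
    rw [ftc_aux hu'c hderiv le_rfl hy.1 hy.2, hu0, sub_zero]
  -- Hölder lower bounds
  have hlow : ∀ y ∈ Icc (0:ℝ) L, |u y| ^ p ≤ y ^ (p-1) * ∫ t in (0:ℝ)..y, |u' t| ^ p := by
    intro y hy
    have h := abs_int_pow hp hy.1 (hu'c.mono (Icc_subset_Icc le_rfl hy.2))
    rw [hftc y hy, sub_zero] at h
    exact h
  have hlow2 : M ^ p ≤ (L - c) ^ (p-1) * ∫ t in c..L, |u' t| ^ p := by
    have h := abs_int_pow hp hcmem.2 (hu'c.mono (Icc_subset_Icc hcmem.1 le_rfl))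
    rw [ftc_aux hu'c hderiv hcmem.1 hcmem.2 le_rfl, huL, zero_sub, abs_neg] at h
    exact h
  -- energy identity
  have hE : ∫ t in (0:ℝ)..L, |u' t| ^ p = ∫ t in (0:ℝ)..L, r t * |u t| ^ p := by
    have h := ibp_aux hp hu'c hderiv hr hode hu0 hL.le le_rfl
    rw [huL, mul_zero, zero_add] at h
    exact h
  -- energy lower bound
  have hmemL : L ∈ Icc (0:ℝ) L := ⟨hL.le, le_rfl⟩
  have hmem0 : (0:ℝ) ∈ Icc (0:ℝ) L := ⟨le_rfl, hL.le⟩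
  have hmemc : c ∈ Icc (0:ℝ) L := hcmem
  have hElow : M ^ p * (2 ^ p / L ^ (p-1)) ≤ ∫ t in (0:ℝ)..L, |u' t| ^ p := by
    have hsplit : (∫ t in (0:ℝ)..c, |u' t| ^ p) + ∫ t in c..L, |u' t| ^ p
        = ∫ t in (0:ℝ)..L, |u' t| ^ p :=
      intervalIntegral.integral_add_adjacent_intervals
        (hintOf hup_cont hmem0 hmemc) (hintOf hup_cont hmemc hmemL)
    have hcs : (0:ℝ) < c ^ (p-1) := Real.rpow_pos_of_pos hc0 _
    have hLcs : (0:ℝ) < (L - c) ^ (p-1) := Real.rpow_pos_of_pos (by linarith) _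
    have h1 : M ^ p / c ^ (p-1) ≤ ∫ t in (0:ℝ)..c, |u' t| ^ p := by
      rw [div_le_iff₀ hcs]
      have := hlow c hcmem
      rw [← hMdef] at this
      linarith
    have h2 : M ^ p / (L - c) ^ (p-1) ≤ ∫ t in c..L, |u' t| ^ p := by
      rw [div_le_iff₀ hLcs]
      linarith
    have am := amgm_aux hc0 (by linarith : (0:ℝ) < L - c) hs0
    rw [show c + (L - c) = L by ring, show p - 1 + 1 = p by ring] at am
    have am' : M ^ p * (2 ^ p / L ^ (p-1)) ≤ M ^ p * (1 / c ^ (p-1) + 1 / (L - c) ^ (p-1)) :=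
      mul_le_mul_of_nonneg_left am hMp0.le
    calc M ^ p * (2 ^ p / L ^ (p-1))
        ≤ M ^ p * (1 / c ^ (p-1) + 1 / (L - c) ^ (p-1)) := am'
      _ = M ^ p / c ^ (p-1) + M ^ p / (L - c) ^ (p-1) := by ring
      _ ≤ (∫ t in (0:ℝ)..c, |u' t| ^ p) + ∫ t in c..L, |u' t| ^ p := by linarith
      _ = ∫ t in (0:ℝ)..L, |u' t| ^ p := hsplit
  -- first maximum point a
  set S := Icc (0:ℝ) L ∩ (fun x => |u x|) ⁻¹' {M} with hSdef
  have hSclosed : IsClosed S :=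
    hu_cont.abs.preimage_isClosed_of_isClosed isClosed_Icc isClosed_singleton
  have hSne : S.Nonempty := ⟨c, hcmem, rfl⟩
  have hSbdd : BddBelow S := ⟨0, fun x hx => hx.1.1⟩
  set a := sInf S with hadef
  have haS : a ∈ S := hSclosed.csInf_mem hSne hSbdd
  have haIcc : a ∈ Icc (0:ℝ) L := haS.1
  have haM : |u a| = M := haS.2
  have ha0 : 0 < a := by
    rcases haIcc.1.lt_or_eq with h | h
    · exact h
    · exfalso; rw [← h, hu0, abs_zero] at haM; rw [← haM] at hM0; exact lt_irrefl 0 hM0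
  have haL : a < L := by
    rcases haIcc.2.lt_or_eq with h | h
    · exact h
    · exfalso; rw [h, huL, abs_zero] at haM; rw [← haM] at hM0; exact lt_irrefl 0 hM0
  have hlt : ∀ x, 0 ≤ x → x < a → |u x| < M := by
    intro x hx hxa
    have hxmem : x ∈ Icc (0:ℝ) L := ⟨hx, le_trans (le_of_lt (lt_trans hxa haL)) le_rfl⟩
    refine lt_of_le_of_ne (hMx x hxmem) ?_
    intro hEq
    exact absurd (csInf_le hSbdd ⟨hxmem, hEq⟩) (not_le.mpr hxa)
  -- u' a = 0
  have hu'a : u' a = 0 := by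
    have hda : HasDerivAt u (u' a) a := (hderiv a haIcc).hasDerivAt (Icc_mem_nhds ha0 haL)
    have hnhds : Icc (0:ℝ) L ∈ nhds a := Icc_mem_nhds ha0 haL
    rcases abs_cases (u a) with ⟨h1, _⟩ | ⟨h1, _⟩
    · have hmax : IsLocalMax u a := by
        filter_upwards [hnhds] with x hx
        calc u x ≤ |u x| := le_abs_self _
          _ ≤ M := hMx x hx
          _ = u a := by rw [← haM, h1]
      exact hmax.hasDerivAt_eq_zero hda
    · have hmin : IsLocalMin u a := by
        filter_upwards [hnhds] with x hx
        calc u a = -M := by rw [← haM, h1, neg_neg]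
          _ ≤ -|u x| := by have := hMx x hx; linarith
          _ ≤ u x := neg_abs_le _
      exact hmin.hasDerivAt_eq_zero hda
  -- IBP on [0, a]
  have hEa : ∫ t in (0:ℝ)..a, |u' t| ^ p = ∫ t in (0:ℝ)..a, r t * |u t| ^ p := by
    have h := ibp_aux hp hu'c hderiv hr hode hu0 ha0.le haIcc.2
    rw [hu'a] at h
    simpa using h
  have hEa_pos : 0 < ∫ t in (0:ℝ)..a, |u' t| ^ p := by
    have h := hlow a haIcc
    rw [haM] at h
    have has : (0:ℝ) < a ^ (p-1) := Real.rpow_pos_of_pos ha0 _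
    nlinarith
  -- pointwise inequalities for integrands
  have hpw1 : ∀ t ∈ Icc (0:ℝ) L, r t * |u t| ^ p ≤ max (r t) 0 * |u t| ^ p := by
    intro t ht
    exact mul_le_mul_of_nonneg_right (le_max_left _ _) (Real.rpow_nonneg (abs_nonneg _) _)
  -- strict head bound
  have hmema : a ∈ Icc (0:ℝ) L := haIcc
  have hK : 0 < ∫ t in (0:ℝ)..a, max (r t) 0 * (M ^ p - |u t| ^ p) := by
    have hg_cont : ContinuousOn (fun t => max (r t) 0 * (M ^ p - |u t| ^ p)) (Icc 0 L) :=
      hrp_cont.mul (continuousOn_const.sub huup_cont)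
    have hg_nonneg : ∀ t ∈ Icc (0:ℝ) L, 0 ≤ max (r t) 0 * (M ^ p - |u t| ^ p) := by
      intro t ht
      apply mul_nonneg (le_max_right _ _)
      have := Real.rpow_le_rpow (abs_nonneg (u t)) (hMx t ht) hp0.le
      linarith
    have hnn : 0 ≤ ∫ t in (0:ℝ)..a, max (r t) 0 * (M ^ p - |u t| ^ p) :=
      intervalIntegral.integral_nonneg ha0.le
        (fun t ht => hg_nonneg t ⟨ht.1, le_trans ht.2 haIcc.2⟩)
    rcases hnn.lt_or_eq with h | h
    · exact h
    exfalso
    -- the integral is zero; derive r₊ * |u|^p = 0 a.e. on (0, a]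
    have hzero : ∫ t in Ioc (0:ℝ) a, max (r t) 0 * (M ^ p - |u t| ^ p) = 0 := by
      rw [← intervalIntegral.integral_of_le ha0.le, ← h]
    have hinteg : IntegrableOn (fun t => max (r t) 0 * (M ^ p - |u t| ^ p)) (Ioc 0 a) := by
      have := hintOf hg_cont hmem0 hmema
      rwa [intervalIntegrable_iff_integrableOn_Ioc_of_le ha0.le] at this
    have hae0 : (fun t => max (r t) 0 * (M ^ p - |u t| ^ p))
        =ᵐ[volume.restrict (Ioc 0 a)] 0 := by
      refine (MeasureTheory.integral_eq_zero_iff_of_nonneg_ae ?_ hinteg).mp hzero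
      filter_upwards [ae_restrict_mem measurableSet_Ioc] with t ht
      exact hg_nonneg t ⟨ht.1.le, le_trans ht.2 haIcc.2⟩
    have hne_a : ∀ᵐ x ∂(volume.restrict (Ioc (0:ℝ) a)), x ≠ a := by
      apply ae_restrict_of_ae
      rw [ae_iff]
      have hset : {x : ℝ | ¬ x ≠ a} = {a} := by ext x; simp
      rw [hset]
      exact measure_singleton a
    have hz : (fun t => max (r t) 0 * |u t| ^ p) =ᵐ[volume.restrict (Ioc (0:ℝ) a)] 0 := by
      filter_upwards [hae0, hne_a, ae_restrict_mem measurableSet_Ioc] with x hx hxa hxm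
      have hxa' : x < a := lt_of_le_of_ne hxm.2 hxa
      have hpos : 0 < M ^ p - |u x| ^ p := by
        have := Real.rpow_lt_rpow (abs_nonneg _) (hlt x hxm.1.le hxa') hp0
        linarith
      have hr0 : max (r x) 0 = 0 := by
        rcases mul_eq_zero.mp hx with h' | h'
        · exact h'
        · exact absurd h' (ne_of_gt hpos)
      simp [hr0]
    have hzz : ∫ t in Ioc (0:ℝ) a, max (r t) 0 * |u t| ^ p = 0 :=
      MeasureTheory.integral_eq_zero_of_ae hz
    have hle : ∫ t in (0:ℝ)..a, r t * |u t| ^ p ≤ ∫ t in (0:ℝ)..a, max (r t) 0 * |u t| ^ p :=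
      intervalIntegral.integral_mono_on ha0.le (hintOf hrup_cont hmem0 hmema)
        (hintOf hrpu_cont hmem0 hmema)
        (fun t ht => hpw1 t ⟨ht.1, le_trans ht.2 haIcc.2⟩)
    have hzz' : ∫ t in (0:ℝ)..a, max (r t) 0 * |u t| ^ p = 0 := by
      rw [intervalIntegral.integral_of_le ha0.le]; exact hzz
    rw [hEa] at hEa_pos
    linarith
  have hKsplit : ∫ t in (0:ℝ)..a, max (r t) 0 * (M ^ p - |u t| ^ p)
      = M ^ p * (∫ t in (0:ℝ)..a, max (r t) 0) - ∫ t in (0:ℝ)..a, max (r t) 0 * |u t| ^ p := by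
    rw [← intervalIntegral.integral_const_mul,
      ← intervalIntegral.integral_sub (by
        exact (hintOf hrp_cont hmem0 hmema).const_mul _) (hintOf hrpu_cont hmem0 hmema)]
    apply intervalIntegral.integral_congr
    intro t ht
    ring
  have hhead : ∫ t in (0:ℝ)..a, r t * |u t| ^ p
      < M ^ p * ∫ t in (0:ℝ)..a, max (r t) 0 := by
    have hle : ∫ t in (0:ℝ)..a, r t * |u t| ^ p ≤ ∫ t in (0:ℝ)..a, max (r t) 0 * |u t| ^ p :=
      intervalIntegral.integral_mono_on ha0.le (hintOf hrup_cont hmem0 hmema)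
        (hintOf hrpu_cont hmem0 hmema)
        (fun t ht => hpw1 t ⟨ht.1, le_trans ht.2 haIcc.2⟩)
    rw [hKsplit] at hK
    linarith
  -- tail bound
  have htail : ∫ t in a..L, r t * |u t| ^ p ≤ M ^ p * ∫ t in a..L, max (r t) 0 := by
    rw [← intervalIntegral.integral_const_mul]
    apply intervalIntegral.integral_mono_on haIcc.2 (hintOf hrup_cont hmema hmemL)
      ((hintOf hrp_cont hmema hmemL).const_mul _)
    intro t ht
    have htm : t ∈ Icc (0:ℝ) L := ⟨le_trans ha0.le ht.1, ht.2⟩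
    calc r t * |u t| ^ p ≤ max (r t) 0 * |u t| ^ p := hpw1 t htm
      _ ≤ max (r t) 0 * M ^ p :=
        mul_le_mul_of_nonneg_left
          (Real.rpow_le_rpow (abs_nonneg _) (hMx t htm) hp0.le) (le_max_right _ _)
      _ = M ^ p * max (r t) 0 := by ring
  -- combine
  have hsplitr : (∫ t in (0:ℝ)..a, r t * |u t| ^ p) + ∫ t in a..L, r t * |u t| ^ p
      = ∫ t in (0:ℝ)..L, r t * |u t| ^ p :=
    intervalIntegral.integral_add_adjacent_intervals
      (hintOf hrup_cont hmem0 hmema) (hintOf hrup_cont hmema hmemL)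
  have hsplitrp : (∫ t in (0:ℝ)..a, max (r t) 0) + ∫ t in a..L, max (r t) 0
      = ∫ t in (0:ℝ)..L, max (r t) 0 :=
    intervalIntegral.integral_add_adjacent_intervals
      (hintOf hrp_cont hmem0 hmema) (hintOf hrp_cont hmema hmemL)
  have hstrict : ∫ t in (0:ℝ)..L, r t * |u t| ^ p
      < M ^ p * ∫ t in (0:ℝ)..L, max (r t) 0 := by
    rw [← hsplitr, ← hsplitrp, mul_add]
    linarith
  have hfinal : M ^ p * (2 ^ p / L ^ (p-1)) < M ^ p * ∫ t in (0:ℝ)..L, max (r t) 0 := by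
    calc M ^ p * (2 ^ p / L ^ (p-1)) ≤ ∫ t in (0:ℝ)..L, |u' t| ^ p := hElow
      _ = ∫ t in (0:ℝ)..L, r t * |u t| ^ p := hE
      _ < M ^ p * ∫ t in (0:ℝ)..L, max (r t) 0 := hstrict
  exact (mul_lt_mul_iff_right₀ hMp0).mp hfinal
end

section
/- Let 1 < p < ∞ and λ < 0, and set K = (−λ/(p−1))^{1/p}. For every function u : [0,π_p] → ℝ that is continuously differentiable on [0,π_p] with u(0) = u(π_p) = 0, the Sobolev-type inequality holds: 2·K^{p−1}·(coth_p(K·π_p/2))^{p−1}·(max_{x∈[0,π_p]} |u(x)|)^p ≤ ∫₀^{π_p} |u′(x)|^p dx − λ∫₀^{π_p} |u(x)|^p dx. -/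
/-- `arcsinh_p x = ∫₀ˣ (1 + tᵖ)^(-1/p) dt`. -/
noncomputable def arcsinhP (p x : ℝ) : ℝ := ∫ t in (0:ℝ)..x, (1 + t ^ p) ^ (-(1 / p))

/-- `sinh_p : [0,∞) → [0,∞)`, defined as the inverse of `arcsinh_p` on `[0,∞)`. -/
noncomputable def sinhP (p : ℝ) : ℝ → ℝ := Function.invFunOn (arcsinhP p) (Set.Ici 0)

/-- `cosh_p x = (1 + sinh_p x ^ p)^(1/p)`. -/
noncomputable def coshP (p x : ℝ) : ℝ := (1 + sinhP p x ^ p) ^ (1 / p)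

/-- `coth_p x = cosh_p x / sinh_p x`. -/
noncomputable def cothP (p x : ℝ) : ℝ := coshP p x / sinhP p x

set_option linter.unusedSectionVars false

open Set MeasureTheory intervalIntegral Real

section basic
variable {p : ℝ} (hp : 1 < p)
include hp

lemma hp0 : 0 < p := lt_trans one_pos hp

lemma g_pos {t : ℝ} (ht : 0 ≤ t) : 0 < (1 + t ^ p) ^ (-(1 / p)) :=
  Real.rpow_pos_of_pos (by positivity) _

lemma g_le_one {t : ℝ} (ht : 0 ≤ t) : (1 + t ^ p) ^ (-(1 / p)) ≤ 1 := by
  apply Real.rpow_le_one_of_one_le_of_nonpos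
  · nlinarith [Real.rpow_nonneg ht p]
  · simp [le_of_lt (hp0 hp)]

lemma g_contAt {t : ℝ} (ht : 0 ≤ t) :
    ContinuousAt (fun t : ℝ => (1 + t ^ p) ^ (-(1 / p))) t := by
  have h1 : ContinuousAt (fun t : ℝ => 1 + t ^ p) t :=
    continuousAt_const.add (Real.continuousAt_rpow_const t p (Or.inr (hp0 hp).le))
  exact ContinuousAt.rpow_const h1 (Or.inl (by positivity))

lemma g_intInt {a b : ℝ} (ha : 0 ≤ a) (hb : 0 ≤ b) :
    IntervalIntegrable (fun t : ℝ => (1 + t ^ p) ^ (-(1 / p))) volume a b := by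
  apply ContinuousOn.intervalIntegrable
  intro t htt
  have : 0 ≤ t := le_trans (le_min ha hb) htt.1
  exact (g_contAt hp this).continuousWithinAt

lemma arcsinhP_hasDerivAt {x : ℝ} (hx : 0 < x) :
    HasDerivAt (arcsinhP p) ((1 + x ^ p) ^ (-(1 / p))) x := by
  apply intervalIntegral.integral_hasDerivAt_right (g_intInt hp le_rfl hx.le)
  · exact ContinuousAt.stronglyMeasurableAtFilter isOpen_Ioi
      (fun t htt => g_contAt hp (le_of_lt htt)) x hx
  · exact g_contAt hp hx.le

lemma arcsinhP_zero : arcsinhP p 0 = 0 := intervalIntegral.integral_same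

lemma arcsinhP_strictMonoOn : StrictMonoOn (arcsinhP p) (Ici 0) := by
  intro a ha b hb hab
  have h1 : arcsinhP p b - arcsinhP p a = ∫ t in a..b, (1 + t ^ p) ^ (-(1 / p)) := by
    rw [arcsinhP, arcsinhP, ← intervalIntegral.integral_add_adjacent_intervals
      (g_intInt hp le_rfl ha) (g_intInt hp ha hb)]
    ring
  have h2 : 0 < ∫ t in a..b, (1 + t ^ p) ^ (-(1 / p)) := by
    apply intervalIntegral.intervalIntegral_pos_of_pos_on (g_intInt hp ha hb)
    · intro t htt
      exact g_pos hp (le_trans ha htt.1.le)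
    · exact hab
  linarith [h1 ▸ h2]

lemma arcsinhP_nonneg {x : ℝ} (hx : 0 ≤ x) : 0 ≤ arcsinhP p x := by
  rcases eq_or_lt_of_le hx with h | h
  · simp [← h, arcsinhP_zero hp]
  · have := arcsinhP_strictMonoOn hp (self_mem_Ici (a := (0:ℝ))) hx h
    rw [arcsinhP_zero hp] at this; exact this.le

lemma arcsinhP_le_self {x : ℝ} (hx : 0 ≤ x) : arcsinhP p x ≤ x := by
  have : arcsinhP p x ≤ ∫ t in (0:ℝ)..x, (1:ℝ) := by
    apply intervalIntegral.integral_mono_on hx (g_intInt hp le_rfl hx)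
      intervalIntegrable_const
    intro t ht; exact g_le_one hp ht.1
  simpa using this

lemma arcsinhP_continuousOn {b : ℝ} (hb : 0 ≤ b) : ContinuousOn (arcsinhP p) (Icc 0 b) := by
  have := intervalIntegral.continuousOn_primitive_interval'
    (μ := volume) (g_intInt hp le_rfl hb) (left_mem_uIcc (a := (0:ℝ)) (b := b))
  rw [Set.uIcc_of_le hb] at this
  exact this

lemma arcsinhP_surjOn {y : ℝ} (hy : 0 ≤ y) : ∃ x, 0 ≤ x ∧ arcsinhP p x = y := by
  -- growth: for x ≥ 1, arcsinhP p x ≥ 2^(-(1/p)) * log x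
  have grow : ∀ x : ℝ, 1 ≤ x → (2:ℝ) ^ (-(1/p)) * Real.log x ≤ arcsinhP p x := by
    intro x hx
    have h01 : (0:ℝ) ≤ 1 := zero_le_one
    have hsplit : arcsinhP p x = (∫ t in (0:ℝ)..1, (1 + t ^ p) ^ (-(1 / p)))
        + ∫ t in (1:ℝ)..x, (1 + t ^ p) ^ (-(1 / p)) := by
      rw [arcsinhP, ← intervalIntegral.integral_add_adjacent_intervals
        (g_intInt hp le_rfl h01) (g_intInt hp h01 (le_trans h01 hx))]
    have h1 : 0 ≤ ∫ t in (0:ℝ)..1, (1 + t ^ p) ^ (-(1 / p)) := by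
      apply intervalIntegral.integral_nonneg h01
      intro t ht; exact (g_pos hp ht.1).le
    have h2 : ∫ t in (1:ℝ)..x, (2:ℝ) ^ (-(1/p)) * t⁻¹ ≤
        ∫ t in (1:ℝ)..x, (1 + t ^ p) ^ (-(1 / p)) := by
      apply intervalIntegral.integral_mono_on hx
      · apply ContinuousOn.intervalIntegrable
        apply ContinuousOn.mul continuousOn_const
        apply ContinuousOn.inv₀ continuousOn_id
        intro t ht; rw [Set.uIcc_of_le hx] at ht; intro h; rw [id] at h; linarith [ht.1]
      · exact g_intInt hp h01 (le_trans h01 hx)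
      · intro t ht
        have ht1 : 1 ≤ t := ht.1
        have htp : 0 < t := lt_of_lt_of_le one_pos ht1
        have htp1 : (1:ℝ) ≤ t ^ p := Real.one_le_rpow ht1 (hp0 hp).le
        have : (2:ℝ) ^ (-(1/p)) * t⁻¹ = (2 * t ^ p) ^ (-(1/p)) := by
          rw [Real.mul_rpow (by norm_num) (Real.rpow_nonneg htp.le p)]
          congr 1
          rw [← Real.rpow_mul htp.le, show p * (-(1/p)) = -1 by
            field_simp]
          exact (Real.rpow_neg_one t).symm
        rw [this]
        apply Real.rpow_le_rpow_of_nonpos (by positivity) (by linarith) (by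
          simp [le_of_lt (hp0 hp)])
    have h3 : ∫ t in (1:ℝ)..x, (2:ℝ) ^ (-(1/p)) * t⁻¹ = (2:ℝ) ^ (-(1/p)) * Real.log x := by
      rw [intervalIntegral.integral_const_mul, integral_inv_of_pos one_pos
        (lt_of_lt_of_le one_pos hx)]
      simp
    linarith [hsplit ▸ add_le_add h1 (h3 ▸ h2)]
  set X := Real.exp ((2:ℝ) ^ (1/p) * y) with hX
  have hX1 : (1:ℝ) ≤ X := Real.one_le_exp (by positivity)
  have hAX : y ≤ arcsinhP p X := by
    have hgw := grow X hX1
    rw [hX, Real.log_exp] at hgw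
    calc y = (2:ℝ)^(-(1/p)) * ((2:ℝ)^(1/p) * y) := by
            rw [← mul_assoc, ← Real.rpow_add (by norm_num), neg_add_cancel,
              Real.rpow_zero, one_mul]
      _ ≤ _ := hgw
  have hIVT := intermediate_value_Icc (le_trans zero_le_one hX1)
    (arcsinhP_continuousOn hp (le_trans zero_le_one hX1))
  have hy' : y ∈ Icc (arcsinhP p 0) (arcsinhP p X) :=
    ⟨by rw [arcsinhP_zero hp]; exact hy, hAX⟩
  obtain ⟨x, hx, hxy⟩ := hIVT hy'
  exact ⟨x, hx.1, hxy⟩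

end basic

section hyper
variable {p : ℝ} (hp : 1 < p)
include hp

lemma sinhP_spec {y : ℝ} (hy : 0 ≤ y) :
    0 ≤ sinhP p y ∧ arcsinhP p (sinhP p y) = y := by
  obtain ⟨x, hx, hxy⟩ := arcsinhP_surjOn hp hy
  exact ⟨Function.invFunOn_mem ⟨x, hx, hxy⟩, Function.invFunOn_eq ⟨x, hx, hxy⟩⟩

lemma sinhP_nonneg {y : ℝ} (hy : 0 ≤ y) : 0 ≤ sinhP p y := (sinhP_spec hp hy).1

lemma arcsinhP_sinhP {y : ℝ} (hy : 0 ≤ y) : arcsinhP p (sinhP p y) = y := (sinhP_spec hp hy).2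

lemma sinhP_arcsinhP {x : ℝ} (hx : 0 ≤ x) : sinhP p (arcsinhP p x) = x := by
  have hA := arcsinhP_nonneg hp hx
  have h1 := arcsinhP_sinhP hp hA
  exact (arcsinhP_strictMonoOn hp).injOn (sinhP_nonneg hp hA) hx h1

lemma sinhP_zero : sinhP p 0 = 0 := by
  have := sinhP_arcsinhP hp (le_refl (0:ℝ))
  rwa [arcsinhP_zero hp] at this

lemma self_le_sinhP {y : ℝ} (hy : 0 ≤ y) : y ≤ sinhP p y := by
  have h := arcsinhP_le_self hp (sinhP_nonneg hp hy)
  rwa [arcsinhP_sinhP hp hy] at h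

lemma sinhP_pos {y : ℝ} (hy : 0 < y) : 0 < sinhP p y :=
  lt_of_lt_of_le hy (self_le_sinhP hp hy.le)

lemma sinhP_strictMonoOn : StrictMonoOn (sinhP p) (Ici 0) := by
  intro a ha b hb hab
  have h := (arcsinhP_strictMonoOn hp).lt_iff_lt
    (sinhP_nonneg hp ha : sinhP p a ∈ Ici 0) (sinhP_nonneg hp hb : sinhP p b ∈ Ici 0)
  rw [arcsinhP_sinhP hp ha, arcsinhP_sinhP hp hb] at h
  exact h.1 hab

lemma sinhP_monotoneOn : MonotoneOn (sinhP p) (Ici 0) :=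
  (sinhP_strictMonoOn hp).monotoneOn

lemma sinhP_continuousAt {y : ℝ} (hy : 0 < y) : ContinuousAt (sinhP p) y := by
  apply (sinhP_strictMonoOn hp).continuousAt_of_image_mem_nhds
    (Ici_mem_nhds hy)
  have himg : Ici (0:ℝ) ⊆ sinhP p '' Ici 0 := by
    intro x hx
    exact ⟨arcsinhP p x, arcsinhP_nonneg hp hx, sinhP_arcsinhP hp hx⟩
  exact Filter.mem_of_superset (Ici_mem_nhds (sinhP_pos hp hy)) himg

lemma sinhP_hasDerivAt {y : ℝ} (hy : 0 < y) : HasDerivAt (sinhP p) (coshP p y) y := by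
  have hBy : 0 < sinhP p y := sinhP_pos hp hy
  have hf : HasDerivAt (arcsinhP p) ((1 + (sinhP p y) ^ p) ^ (-(1 / p))) (sinhP p y) :=
    arcsinhP_hasDerivAt hp hBy
  have hne : (1 + (sinhP p y) ^ p) ^ (-(1 / p)) ≠ 0 := ne_of_gt (g_pos hp hBy.le)
  have hfg : ∀ᶠ z in nhds y, arcsinhP p (sinhP p z) = z :=
    Filter.eventually_of_mem (Ioi_mem_nhds hy) fun z hz => arcsinhP_sinhP hp (le_of_lt hz)
  have h := HasDerivAt.of_local_left_inverse (sinhP_continuousAt hp hy) hf hne hfg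
  have : ((1 + sinhP p y ^ p) ^ (-(1 / p)))⁻¹ = coshP p y := by
    have hX : (0:ℝ) ≤ 1 + sinhP p y ^ p := by
      nlinarith [Real.rpow_nonneg (sinhP_nonneg hp hy.le) p]
    rw [Real.rpow_neg hX, inv_inv, coshP]
  rwa [this] at h

lemma one_le_coshP {y : ℝ} (hy : 0 ≤ y) : 1 ≤ coshP p y := by
  have h1 : (1:ℝ) ≤ 1 + sinhP p y ^ p := by
    nlinarith [Real.rpow_nonneg (sinhP_nonneg hp hy) p]
  calc (1:ℝ) = 1 ^ (1/p) := (Real.one_rpow _).symm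
    _ ≤ (1 + sinhP p y ^ p) ^ (1/p) :=
        Real.rpow_le_rpow zero_le_one h1 (by positivity)

lemma coshP_pos {y : ℝ} (hy : 0 ≤ y) : 0 < coshP p y :=
  lt_of_lt_of_le one_pos (one_le_coshP hp hy)

lemma coshP_rpow {y : ℝ} (hy : 0 ≤ y) : coshP p y ^ p = 1 + sinhP p y ^ p := by
  have hX : (0:ℝ) ≤ 1 + sinhP p y ^ p := by
    nlinarith [Real.rpow_nonneg (sinhP_nonneg hp hy) p]
  rw [coshP, ← Real.rpow_mul hX, one_div_mul_cancel (ne_of_gt (hp0 hp)),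
    Real.rpow_one]

lemma coshP_monotoneOn {a b : ℝ} (ha : 0 ≤ a) (hab : a ≤ b) : coshP p a ≤ coshP p b := by
  have h := sinhP_monotoneOn hp ha (le_trans ha hab) hab
  have h2 : sinhP p a ^ p ≤ sinhP p b ^ p :=
    Real.rpow_le_rpow (sinhP_nonneg hp ha) h (hp0 hp).le
  have h3 : (0:ℝ) ≤ 1 + sinhP p a ^ p := by
    nlinarith [Real.rpow_nonneg (sinhP_nonneg hp ha) p]
  exact Real.rpow_le_rpow h3 (by linarith) (by positivity)

lemma coshP_hasDerivAt {y : ℝ} (hy : 0 < y) :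
    HasDerivAt (coshP p) (coshP p y ^ (2 - p) * sinhP p y ^ (p - 1)) y := by
  have hs := sinhP_pos hp hy
  have hX : (0:ℝ) < 1 + sinhP p y ^ p := by positivity
  have hinner : HasDerivAt (fun z => 1 + sinhP p z ^ p)
      (p * sinhP p y ^ (p - 1) * coshP p y) y := by
    have h1 : HasDerivAt (fun x : ℝ => x ^ p) (p * sinhP p y ^ (p - 1)) (sinhP p y) :=
      Real.hasDerivAt_rpow_const (Or.inl hs.ne')
    exact (HasDerivAt.const_add 1 (h1.comp y (sinhP_hasDerivAt hp hy)))
  have houter : HasDerivAt (fun x : ℝ => x ^ (1/p))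
      ((1/p) * (1 + sinhP p y ^ p) ^ (1/p - 1)) (1 + sinhP p y ^ p) :=
    Real.hasDerivAt_rpow_const (Or.inl hX.ne')
  have h := houter.comp y hinner
  have heq : (1/p) * (1 + sinhP p y ^ p) ^ (1/p - 1) * (p * sinhP p y ^ (p - 1) * coshP p y)
      = coshP p y ^ (2 - p) * sinhP p y ^ (p - 1) := by
    have hc : 0 < coshP p y := coshP_pos hp hy.le
    have h1 : coshP p y ^ (2 - p) = (1 + sinhP p y ^ p) ^ ((2 - p) / p) := by
      rw [coshP, ← Real.rpow_mul hX.le]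
      congr 1; field_simp
    have h2 : (1 + sinhP p y ^ p) ^ (1/p - 1) * coshP p y
        = (1 + sinhP p y ^ p) ^ ((2 - p) / p) := by
      rw [coshP, ← Real.rpow_add hX]
      congr 1; field_simp; ring
    rw [h1, ← h2]; field_simp
  rw [heq] at h
  exact h

lemma cothP_rpow_hasDerivAt {y : ℝ} (hy : 0 < y) :
    HasDerivAt (fun z => cothP p z ^ (p - 1)) (-(p - 1) / sinhP p y ^ p) y := by
  have hs := sinhP_pos hp hy
  have hc := coshP_pos hp hy.le
  have hd : HasDerivAt (fun z => coshP p z / sinhP p z)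
      ((coshP p y ^ (2 - p) * sinhP p y ^ (p - 1) * sinhP p y - coshP p y * coshP p y) /
        sinhP p y ^ 2) y :=
    (coshP_hasDerivAt hp hy).div (sinhP_hasDerivAt hp hy) hs.ne'
  have hq : 0 < coshP p y / sinhP p y := div_pos hc hs
  have houter : HasDerivAt (fun x : ℝ => x ^ (p - 1))
      ((p - 1) * (coshP p y / sinhP p y) ^ (p - 1 - 1)) (coshP p y / sinhP p y) :=
    Real.hasDerivAt_rpow_const (Or.inl hq.ne')
  have h := houter.comp y hd
  have heq : (p - 1) * (coshP p y / sinhP p y) ^ (p - 1 - 1) *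
      ((coshP p y ^ (2 - p) * sinhP p y ^ (p - 1) * sinhP p y - coshP p y * coshP p y) /
        sinhP p y ^ 2) = -(p - 1) / sinhP p y ^ p := by
    set s := sinhP p y with hsdef
    set c := coshP p y with hcdef
    have hcs : c ^ p = 1 + s ^ p := coshP_rpow hp hy.le
    have h1 : s ^ (p - 1) * s = s ^ p := by
      rw [← Real.rpow_add_one hs.ne']; ring_nf
    have h2 : c * c = c ^ (2 - p) * c ^ p := by
      rw [← Real.rpow_add hc, show (2 - p + p) = ((2:ℕ):ℝ) by norm_num, Real.rpow_natCast]
      ring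
    have hnum : c ^ (2 - p) * s ^ (p - 1) * s - c * c = -(c ^ (2 - p)) := by
      rw [mul_assoc, h1, h2, hcs]; ring
    have h3 : (c / s) ^ (p - 1 - 1) = c ^ (p - 2) / s ^ (p - 2) := by
      rw [show p - 1 - 1 = p - 2 by ring, Real.div_rpow hc.le hs.le]
    have hcc : c ^ (p - 2) * c ^ (2 - p) = 1 := by
      rw [← Real.rpow_add hc]; norm_num
    have hss : s ^ (p - 2) * s ^ (2:ℕ) = s ^ p := by
      rw [show (s:ℝ) ^ (2:ℕ) = s ^ ((2:ℕ):ℝ) from (Real.rpow_natCast s 2).symm,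
        ← Real.rpow_add hs]
      norm_num
    have hXY : (c / s) ^ (p - 1 - 1) *
        ((c ^ (2 - p) * s ^ (p - 1) * s - c * c) / s ^ 2) = -(1 / s ^ p) := by
      rw [h3, hnum, ← neg_div, div_mul_div_comm, mul_neg, hcc, hss]
    rw [mul_assoc, hXY]
    ring
  rw [heq] at h
  exact h

end hyper

section pfun
variable {p : ℝ} (hp : 1 < p)
include hp

lemma abs_rpow_mul_le {t r : ℝ} : |t| ^ (p - 2) * t * r ≤ |t| ^ (p - 1) * |r| := by
  rcases eq_or_ne t 0 with h | h
  · simp [h, Real.zero_rpow (by linarith : p - 1 ≠ 0)]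
  · have habs : (0:ℝ) < |t| := abs_pos.mpr h
    calc |t| ^ (p - 2) * t * r ≤ |(|t| ^ (p - 2) * t * r)| := le_abs_self _
      _ = |t| ^ (p - 2) * |t| * |r| := by
          rw [abs_mul, abs_mul, abs_of_nonneg (Real.rpow_nonneg habs.le _)]
      _ = |t| ^ (p - 1) * |r| := by
          rw [← Real.rpow_add_one habs.ne', show p - 2 + 1 = p - 1 by ring]

lemma young' {v a b : ℝ} (hv : 0 ≤ v) (ha : 0 ≤ a) (hb : 0 ≤ b) :
    p * (v * a ^ (p - 1) * b) ≤ b ^ p + (p - 1) * (v ^ (p / (p - 1)) * a ^ p) := by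
  have hpq : Real.HolderConjugate p (p / (p - 1)) := Real.HolderConjugate.conjExponent hp
  have hy : b * (v * a ^ (p - 1)) ≤
      b ^ p / p + (v * a ^ (p - 1)) ^ (p / (p - 1)) / (p / (p - 1)) :=
    Real.young_inequality_of_nonneg hb (mul_nonneg hv (Real.rpow_nonneg ha (p - 1))) hpq
  have h1 : (v * a ^ (p - 1)) ^ (p / (p - 1)) = v ^ (p / (p - 1)) * a ^ p := by
    rw [Real.mul_rpow hv (Real.rpow_nonneg ha _), ← Real.rpow_mul ha]
    congr 2
    rw [mul_div_assoc', mul_comm (p-1) p, mul_div_assoc, div_self (show p - 1 ≠ 0 by linarith), mul_one]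
  rw [h1] at hy
  have hq : 0 < p / (p - 1) := div_pos (by linarith) (by linarith)
  have hp' : 0 < p := by linarith
  calc p * (v * a ^ (p - 1) * b) = p * (b * (v * a ^ (p - 1))) := by ring
    _ ≤ p * (b ^ p / p + v ^ (p / (p - 1)) * a ^ p / (p / (p - 1))) :=
        mul_le_mul_of_nonneg_left hy hp'.le
    _ = b ^ p + (p - 1) * (v ^ (p / (p - 1)) * a ^ p) := by
        field_simp

end pfun

section wfun
variable {p lam K : ℝ} (hp : 1 < p) (hlam : lam < 0) (hK : K = (-lam / (p - 1)) ^ (1 / p))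
include hp hlam hK

lemma K_pos : 0 < K := by
  rw [hK]
  exact Real.rpow_pos_of_pos (div_pos (neg_pos.2 hlam) (by linarith)) _

lemma K_rpow : K ^ p = -lam / (p - 1) := by
  have hx : (0:ℝ) ≤ -lam / (p - 1) := le_of_lt (div_pos (neg_pos.2 hlam) (by linarith))
  rw [hK, ← Real.rpow_mul hx, one_div_mul_cancel (by positivity : p ≠ 0), Real.rpow_one]

omit hlam hK in
lemma cothP_pos {y : ℝ} (hy : 0 < y) : 0 < cothP p y :=
  div_pos (coshP_pos hp hy.le) (sinhP_pos hp hy)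

lemma w_hasDerivAt {x : ℝ} (hx : 0 < x) :
    HasDerivAt (fun x : ℝ => K ^ (p - 1) * cothP p (K * x) ^ (p - 1))
      (-((p - 1) * K ^ p) / sinhP p (K * x) ^ p) x := by
  have hKp := K_pos hp hlam hK
  have hKx : 0 < K * x := mul_pos hKp hx
  have h1 : HasDerivAt (fun x : ℝ => K * x) K x := by
    simpa using (hasDerivAt_id x).const_mul K
  have h2 := ((cothP_rpow_hasDerivAt hp hKx).comp x h1).const_mul (K ^ (p - 1))
  have hKK : K ^ (p - 1) * K = K ^ p := by
    rw [← Real.rpow_add_one hKp.ne', show p - 1 + 1 = p by ring]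
  have e : -((p - 1) * K ^ p) / sinhP p (K * x) ^ p =
      K ^ (p - 1) * (-(p - 1) / sinhP p (K * x) ^ p * K) := by
    rw [← hKK]
    ring
  rw [e]
  exact h2

lemma riccati {x : ℝ} (hx : 0 < x) :
    -((p - 1) * K ^ p) / sinhP p (K * x) ^ p +
      (p - 1) * ((K ^ (p - 1) * cothP p (K * x) ^ (p - 1)) ^ (p / (p - 1))) = -lam := by
  have hKp := K_pos hp hlam hK
  have hKx : 0 < K * x := mul_pos hKp hx
  have hs : 0 < sinhP p (K * x) := sinhP_pos hp hKx
  have hc : 0 < coshP p (K * x) := coshP_pos hp hKx.le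
  have hcs : coshP p (K * x) ^ p = 1 + sinhP p (K * x) ^ p := coshP_rpow hp hKx.le
  have hcoth : 0 < cothP p (K * x) := cothP_pos hp hKx
  have hcancel : (p - 1) * (p / (p - 1)) = p := by
    rw [mul_div_assoc', mul_comm (p-1) p, mul_div_assoc,
      div_self (show p - 1 ≠ 0 by linarith), mul_one]
  have h1 : (K ^ (p - 1) * cothP p (K * x) ^ (p - 1)) ^ (p / (p - 1)) =
      K ^ p * cothP p (K * x) ^ p := by
    rw [Real.mul_rpow (Real.rpow_nonneg hKp.le _) (Real.rpow_nonneg hcoth.le _),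
      ← Real.rpow_mul hKp.le, ← Real.rpow_mul hcoth.le, hcancel]
  have h2 : cothP p (K * x) ^ p = (1 + sinhP p (K * x) ^ p) / sinhP p (K * x) ^ p := by
    rw [cothP, Real.div_rpow hc.le hs.le, hcs]
  have hsp : sinhP p (K * x) ^ p ≠ 0 := ne_of_gt (Real.rpow_pos_of_pos hs _)
  rw [h1, h2, K_rpow hp hlam hK, ← mul_assoc,
    show (p - 1) * (-lam / (p - 1)) = -lam from by
      have hp1 : p - 1 ≠ 0 := by linarith
      field_simp]
  field_simp
  ring

end wfun

section oneside

lemma uIcc_sub {a b A B : ℝ} (ha : a ∈ Icc A B) (hb : b ∈ Icc A B) :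
    Set.uIcc a b ⊆ Icc A B := by
  rw [Set.uIcc]
  intro t ht
  exact ⟨le_trans (le_min ha.1 hb.1) ht.1, le_trans ht.2 (max_le ha.2 hb.2)⟩

lemma one_side {p lam K : ℝ} (hp : 1 < p) (hlam : lam < 0)
    (hK : K = (-lam / (p - 1)) ^ (1 / p))
    {c : ℝ} (hc : 0 < c) (u u' : ℝ → ℝ)
    (hu' : ContinuousOn u' (Icc 0 c))
    (huderiv : ∀ x ∈ Icc (0:ℝ) c, HasDerivWithinAt u (u' x) (Icc 0 c) x)
    (hu0 : u 0 = 0) :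
    K ^ (p - 1) * cothP p (K * c) ^ (p - 1) * |u c| ^ p ≤
      ∫ x in (0:ℝ)..c, (|u' x| ^ p - lam * |u x| ^ p) := by
  have hKp : 0 < K := K_pos hp hlam hK
  set w : ℝ → ℝ := fun x => K ^ (p - 1) * cothP p (K * x) ^ (p - 1) with hw
  set F : ℝ → ℝ := fun x => |u' x| ^ p - lam * |u x| ^ p with hF
  set H : ℝ → ℝ := fun x => w x * |u x| ^ p with hH
  have habs_cont : Continuous fun t : ℝ => |t| ^ p :=
    continuous_iff_continuousAt.2 fun t => (hasDerivAt_abs_rpow t hp).continuousAt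
  have hu_cont : ContinuousOn u (Icc 0 c) := fun x hx =>
    (huderiv x hx).continuousWithinAt
  have hF_cont : ContinuousOn F (Icc 0 c) := by
    apply ContinuousOn.sub
    · exact habs_cont.comp_continuousOn hu'
    · exact continuousOn_const.mul (habs_cont.comp_continuousOn hu_cont)
  have hF_nonneg : ∀ x, 0 ≤ F x := by
    intro x
    have h1 : 0 ≤ |u' x| ^ p := Real.rpow_nonneg (abs_nonneg _) p
    have h2 : 0 ≤ -lam * |u x| ^ p :=
      mul_nonneg (by linarith) (Real.rpow_nonneg (abs_nonneg _) p)
    simp only [hF]; nlinarith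
  have hFint : ∀ {a b : ℝ}, a ∈ Icc (0:ℝ) c → b ∈ Icc (0:ℝ) c →
      IntervalIntegrable F volume a b := fun ha hb =>
    (hF_cont.mono (uIcc_sub ha hb)).intervalIntegrable
  -- bound on u'
  obtain ⟨C0, hC0⟩ := isCompact_Icc.exists_bound_of_continuousOn hu'
  set C : ℝ := max C0 1 with hCdef
  have hC1 : (1:ℝ) ≤ C := le_max_right _ _
  have hCpos : 0 < C := lt_of_lt_of_le one_pos hC1
  have hC : ∀ x ∈ Icc (0:ℝ) c, ‖u' x‖ ≤ C := fun x hx =>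
    le_trans (hC0 x hx) (le_max_left _ _)
  have hu_lip : ∀ x ∈ Icc (0:ℝ) c, |u x| ≤ C * x := by
    intro x hx
    have h := Convex.norm_image_sub_le_of_norm_hasDerivWithin_le huderiv hC
      (convex_Icc 0 c) (left_mem_Icc.2 hc.le) hx
    rw [hu0, sub_zero, sub_zero, Real.norm_eq_abs, Real.norm_eq_abs,
      abs_of_nonneg hx.1] at h
    exact h
  set B0 : ℝ := coshP p (K * c) with hB0def
  have hB0 : 1 ≤ B0 := one_le_coshP hp (by positivity)
  set D : ℝ := B0 ^ (p - 1) * C ^ p with hDdef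
  have hDpos : 0 < D := by positivity
  -- pointwise derivative bound in the interior
  have hkey : ∀ x ∈ Ioo (0:ℝ) c,
      HasDerivAt H (-((p - 1) * K ^ p) / sinhP p (K * x) ^ p * |u x| ^ p +
        w x * ((p * |u x| ^ (p - 2) * u x) * u' x)) x ∧
      (-((p - 1) * K ^ p) / sinhP p (K * x) ^ p * |u x| ^ p +
        w x * ((p * |u x| ^ (p - 2) * u x) * u' x)) ≤ F x := by
    intro x hx
    have hx0 : 0 < x := hx.1
    have hux : HasDerivAt u (u' x) x :=
      (huderiv x ⟨hx0.le, hx.2.le⟩).hasDerivAt (Icc_mem_nhds hx0 hx.2)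
    have hphi : HasDerivAt (fun y => |u y| ^ p) ((p * |u x| ^ (p - 2) * u x) * u' x) x :=
      (hasDerivAt_abs_rpow (u x) hp).comp x hux
    have hwd := w_hasDerivAt hp hlam hK hx0
    constructor
    · exact hwd.mul hphi
    · have hwpos : 0 < w x := by
        have := cothP_pos hp (mul_pos hKp hx0)
        simp only [hw]
        positivity
      have step1 : w x * ((p * |u x| ^ (p - 2) * u x) * u' x) ≤
          p * (w x * |u x| ^ (p - 1) * |u' x|) := by
        have hinner : (p * |u x| ^ (p - 2) * u x) * u' x ≤ p * (|u x| ^ (p - 1) * |u' x|) := by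
          have := abs_rpow_mul_le hp (t := u x) (r := u' x)
          nlinarith [this, (by linarith : (0:ℝ) < p)]
        calc w x * ((p * |u x| ^ (p - 2) * u x) * u' x)
            ≤ w x * (p * (|u x| ^ (p - 1) * |u' x|)) :=
              mul_le_mul_of_nonneg_left hinner hwpos.le
          _ = p * (w x * |u x| ^ (p - 1) * |u' x|) := by ring
      have step2 : p * (w x * |u x| ^ (p - 1) * |u' x|) ≤
          |u' x| ^ p + (p - 1) * ((w x) ^ (p / (p - 1)) * |u x| ^ p) :=
        young' hp hwpos.le (abs_nonneg _) (abs_nonneg _)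
      have hric := riccati hp hlam hK hx0
      have hricm : -((p - 1) * K ^ p) / sinhP p (K * x) ^ p * |u x| ^ p +
          (p - 1) * ((w x) ^ (p / (p - 1))) * |u x| ^ p = -lam * |u x| ^ p := by
        rw [← add_mul, hric]
      simp only [hF]
      nlinarith [step1, step2, hricm]
  -- main epsilon argument
  have main : ∀ ε, 0 < ε → ε < c → H c ≤ (∫ x in (0:ℝ)..c, F x) + D * ε := by
    intro ε hε hεc
    set G : ℝ → ℝ := fun x => (∫ t in ε..x, F t) - H x with hG
    have hmemε : ε ∈ Icc (0:ℝ) c := ⟨hε.le, hεc.le⟩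
    have hwcont : ContinuousOn w (Icc ε c) := fun x hx =>
      (w_hasDerivAt hp hlam hK (lt_of_lt_of_le hε hx.1)).continuousAt.continuousWithinAt
    have hHcont : ContinuousOn H (Icc ε c) :=
      hwcont.mul ((habs_cont.comp_continuousOn
        (hu_cont.mono (Icc_subset_Icc hε.le le_rfl))))
    have hGcont : ContinuousOn G (Icc ε c) := by
      apply ContinuousOn.sub _ hHcont
      have := intervalIntegral.continuousOn_primitive_interval'
        (μ := volume) (hFint hmemε (right_mem_Icc.2 hc.le)) left_mem_uIcc
      rwa [Set.uIcc_of_le hεc.le] at this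
    have hGderiv : ∀ x ∈ Ioo ε c, HasDerivAt G (F x - (-((p - 1) * K ^ p) /
        sinhP p (K * x) ^ p * |u x| ^ p + w x * ((p * |u x| ^ (p - 2) * u x) * u' x))) x := by
      intro x hx
      have hx' : x ∈ Ioo (0:ℝ) c := ⟨lt_trans hε hx.1, hx.2⟩
      have hint : HasDerivAt (fun y => ∫ t in ε..y, F t) (F x) x := by
        apply intervalIntegral.integral_hasDerivAt_right
          (hFint hmemε ⟨hx'.1.le, hx'.2.le⟩)
        · exact ContinuousAt.stronglyMeasurableAtFilter isOpen_Ioo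
            (fun t ht => ((hF_cont t ⟨ht.1.le, ht.2.le⟩).continuousAt
              (Icc_mem_nhds ht.1 ht.2))) x hx'
        · exact (hF_cont x ⟨hx'.1.le, hx'.2.le⟩).continuousAt (Icc_mem_nhds hx'.1 hx'.2)
      exact hint.sub (hkey x hx').1
    have hmono : MonotoneOn G (Icc ε c) := by
      apply monotoneOn_of_deriv_nonneg (convex_Icc ε c) hGcont
      · intro x hx
        rw [interior_Icc] at hx
        exact (hGderiv x hx).differentiableAt.differentiableWithinAt
      · intro x hx
        rw [interior_Icc] at hx
        rw [(hGderiv x hx).deriv]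
        have hx' : x ∈ Ioo (0:ℝ) c := ⟨lt_trans hε hx.1, hx.2⟩
        linarith [(hkey x hx').2]
    have hGle := hmono (left_mem_Icc.2 hεc.le) (right_mem_Icc.2 hεc.le) hεc.le
    -- G ε = - H ε ; G c = ∫_ε^c F - H c
    have hGε : G ε = -H ε := by simp [hG]
    have hHc : H c ≤ H ε + ∫ t in ε..c, F t := by
      have : -H ε ≤ (∫ t in ε..c, F t) - H c := by rwa [hGε] at hGle
      linarith
    -- ∫_ε^c F ≤ ∫_0^c F
    have hsplit : (∫ t in (0:ℝ)..ε, F t) + (∫ t in ε..c, F t) = ∫ t in (0:ℝ)..c, F t :=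
      intervalIntegral.integral_add_adjacent_intervals
        (hFint (left_mem_Icc.2 hc.le) hmemε) (hFint hmemε (right_mem_Icc.2 hc.le))
    have hpos0 : 0 ≤ ∫ t in (0:ℝ)..ε, F t :=
      intervalIntegral.integral_nonneg hε.le (fun t _ => hF_nonneg t)
    -- H ε ≤ D * ε
    have hHε : H ε ≤ D * ε := by
      have hKε : 0 < K * ε := mul_pos hKp hε
      have hs : 0 < sinhP p (K * ε) := sinhP_pos hp hKε
      have hsl : K * ε ≤ sinhP p (K * ε) := self_le_sinhP hp hKε.le
      have hch : coshP p (K * ε) ≤ B0 :=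
        coshP_monotoneOn hp hKε.le (by nlinarith)
      have hcoth : cothP p (K * ε) ≤ B0 / (K * ε) := by
        rw [cothP]
        apply div_le_div₀ (by positivity) (le_trans (le_refl _) hch) hKε hsl
      have hcoth_nonneg : 0 ≤ cothP p (K * ε) := (cothP_pos hp hKε).le
      have h1 : cothP p (K * ε) ^ (p - 1) ≤ (B0 / (K * ε)) ^ (p - 1) :=
        Real.rpow_le_rpow hcoth_nonneg hcoth (by linarith)
      have h2 : |u ε| ^ p ≤ (C * ε) ^ p :=
        Real.rpow_le_rpow (abs_nonneg _) (hu_lip ε hmemε) (by positivity)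
      have hval : K ^ (p - 1) * (B0 / (K * ε)) ^ (p - 1) * (C * ε) ^ p = D * ε := by
        rw [Real.div_rpow (by positivity) (by positivity),
          Real.mul_rpow hKp.le hε.le, Real.mul_rpow hCpos.le hε.le, hDdef]
        have hεp : ε ^ p = ε ^ (p - 1) * ε := by
          rw [← Real.rpow_add_one (ne_of_gt hε), show p - 1 + 1 = p by ring]
        rw [hεp]
        have hKne : K ^ (p - 1) ≠ 0 := ne_of_gt (Real.rpow_pos_of_pos hKp _)
        have hεne : ε ^ (p - 1) ≠ 0 := ne_of_gt (Real.rpow_pos_of_pos hε _)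
        field_simp
      calc H ε = K ^ (p - 1) * cothP p (K * ε) ^ (p - 1) * |u ε| ^ p := rfl
        _ ≤ K ^ (p - 1) * (B0 / (K * ε)) ^ (p - 1) * (C * ε) ^ p := by
            apply mul_le_mul _ h2 (Real.rpow_nonneg (abs_nonneg _) _) (by positivity)
            exact mul_le_mul_of_nonneg_left h1 (Real.rpow_nonneg hKp.le _)
        _ = D * ε := hval
    linarith
  -- conclude by letting ε → 0
  have hfinal : H c ≤ ∫ x in (0:ℝ)..c, F x := by
    apply le_of_forall_pos_le_add
    intro δ hδ
    have hε : 0 < min (c / 2) (δ / D) := lt_min (by linarith) (div_pos hδ hDpos)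
    have hεc : min (c / 2) (δ / D) < c := lt_of_le_of_lt (min_le_left _ _) (by linarith)
    have h := main _ hε hεc
    have : D * min (c / 2) (δ / D) ≤ δ := by
      calc D * min (c / 2) (δ / D) ≤ D * (δ / D) :=
            mul_le_mul_of_nonneg_left (min_le_right _ _) hDpos.le
        _ = δ := by field_simp
    linarith
  exact hfinal

end oneside

section assemble

lemma w_convexOn {p lam K : ℝ} (hp : 1 < p) (hlam : lam < 0)
    (hK : K = (-lam / (p - 1)) ^ (1 / p)) :
    ConvexOn ℝ (Ioi 0) (fun x => K ^ (p - 1) * cothP p (K * x) ^ (p - 1)) := by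
  have hKp : 0 < K := K_pos hp hlam hK
  apply MonotoneOn.convexOn_of_deriv (convex_Ioi 0)
  · exact fun x hx => (w_hasDerivAt hp hlam hK hx).continuousAt.continuousWithinAt
  · rw [interior_Ioi]
    exact fun x hx => (w_hasDerivAt hp hlam hK hx).differentiableAt.differentiableWithinAt
  · rw [interior_Ioi]
    intro a ha b hb hab
    rw [(w_hasDerivAt hp hlam hK ha).deriv, (w_hasDerivAt hp hlam hK hb).deriv]
    have hsa : 0 < sinhP p (K * a) := sinhP_pos hp (mul_pos hKp ha)
    have hsb : 0 < sinhP p (K * b) := sinhP_pos hp (mul_pos hKp hb)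
    have hsa' : 0 < sinhP p (K * a) ^ p := Real.rpow_pos_of_pos hsa _
    have hmono : sinhP p (K * a) ^ p ≤ sinhP p (K * b) ^ p := by
      apply Real.rpow_le_rpow hsa.le _ (by linarith)
      exact sinhP_monotoneOn hp (Set.mem_Ici.2 (mul_pos hKp ha).le)
        (Set.mem_Ici.2 (mul_pos hKp hb).le) (mul_le_mul_of_nonneg_left hab hKp.le)
    have hA : 0 < (p - 1) * K ^ p := by
      have := Real.rpow_pos_of_pos hKp p
      nlinarith
    rw [neg_div, neg_div, neg_le_neg_iff]
    apply div_le_div_of_nonneg_left hA.le hsa' hmono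


/-- Sobolev-type inequality for `λ < 0`, `K = (-λ/(p-1))^(1/p)`:
`2 K^(p-1) (coth_p (K π_p/2))^(p-1) (max |u|)^p ≤ ∫ |u'|^p - λ ∫ |u|^p`
for `u` continuously differentiable on `[0, π_p]` with `u(0) = u(π_p) = 0`. -/
theorem sobolev_neg_lambda (p lam K : ℝ) (hp : 1 < p) (hlam : lam < 0)
    (hK : K = (-lam / (p - 1)) ^ (1 / p))
    (u u' : ℝ → ℝ)
    (hu' : ContinuousOn u' (Set.Icc 0 (piP p)))
    (huderiv : ∀ x ∈ Set.Icc (0:ℝ) (piP p), HasDerivWithinAt u (u' x) (Set.Icc 0 (piP p)) x)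
    (hu0 : u 0 = 0) (hupi : u (piP p) = 0) :
    2 * K ^ (p - 1) * (cothP p (K * piP p / 2)) ^ (p - 1) *
        (sSup ((fun x => |u x|) '' Set.Icc 0 (piP p))) ^ p ≤
      (∫ x in (0:ℝ)..piP p, |u' x| ^ p) - lam * ∫ x in (0:ℝ)..piP p, |u x| ^ p := by
  have hp0 : (0:ℝ) < p := by linarith
  set L := piP p with hLdef
  have hL0 : 0 ≤ L := by
    rw [hLdef, piP]
    have : 0 ≤ ∫ t in (0:ℝ)..1, (1 - t ^ p) ^ (-(1 / p)) := by
      apply intervalIntegral.integral_nonneg zero_le_one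
      intro t ht
      apply Real.rpow_nonneg
      have : t ^ p ≤ 1 := Real.rpow_le_one ht.1 ht.2 hp0.le
      linarith
    linarith
  have habs_cont : Continuous fun t : ℝ => |t| ^ p :=
    continuous_iff_continuousAt.2 fun t => (hasDerivAt_abs_rpow t hp).continuousAt
  have hu_cont : ContinuousOn u (Icc 0 L) := fun x hx => (huderiv x hx).continuousWithinAt
  rcases eq_or_lt_of_le hL0 with hL | hL
  · -- L = 0 : both sides vanish
    rw [← hL]
    have himg : (fun x => |u x|) '' Icc (0:ℝ) 0 = {0} := by
      rw [Set.Icc_self, Set.image_singleton, hu0, abs_zero]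
    rw [himg, csSup_singleton, Real.zero_rpow (ne_of_gt hp0)]
    simp
  · -- L > 0
    set M := sSup ((fun x => |u x|) '' Icc 0 L) with hM
    have himg_cpt : IsCompact ((fun x => |u x|) '' Icc 0 L) :=
      isCompact_Icc.image_of_continuousOn (continuous_abs.comp_continuousOn hu_cont)
    have himg_ne : ((fun x => |u x|) '' Icc 0 L).Nonempty :=
      ⟨|u 0|, Set.mem_image_of_mem _ (left_mem_Icc.2 hL.le)⟩
    obtain ⟨x₀, hx₀mem, hx₀M⟩ := himg_cpt.sSup_mem himg_ne
    have hMle : ∀ x ∈ Icc (0:ℝ) L, |u x| ≤ M := fun x hx =>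
      le_csSup himg_cpt.bddAbove (Set.mem_image_of_mem _ hx)
    have hM0 : 0 ≤ M := le_trans (abs_nonneg _) (hMle 0 (left_mem_Icc.2 hL.le))
    -- integrability of the two pieces
    have hint1 : IntervalIntegrable (fun x => |u' x| ^ p) volume 0 L := by
      apply ContinuousOn.intervalIntegrable
      rw [Set.uIcc_of_le hL.le]
      exact habs_cont.comp_continuousOn hu'
    have hint2 : IntervalIntegrable (fun x => |u x| ^ p) volume 0 L := by
      apply ContinuousOn.intervalIntegrable
      rw [Set.uIcc_of_le hL.le]
      exact habs_cont.comp_continuousOn hu_cont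
    have hRHS : (∫ x in (0:ℝ)..L, |u' x| ^ p) - lam * ∫ x in (0:ℝ)..L, |u x| ^ p =
        ∫ x in (0:ℝ)..L, (|u' x| ^ p - lam * |u x| ^ p) := by
      rw [intervalIntegral.integral_sub hint1 (hint2.const_mul lam),
        intervalIntegral.integral_const_mul]
    rcases eq_or_lt_of_le hM0 with hMz | hMpos
    · -- M = 0
      rw [← hMz, Real.zero_rpow (ne_of_gt hp0), mul_zero]
      have h1 : 0 ≤ ∫ x in (0:ℝ)..L, |u' x| ^ p :=
        intervalIntegral.integral_nonneg hL.le fun x _ => Real.rpow_nonneg (abs_nonneg _) _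
      have h2 : 0 ≤ ∫ x in (0:ℝ)..L, |u x| ^ p :=
        intervalIntegral.integral_nonneg hL.le fun x _ => Real.rpow_nonneg (abs_nonneg _) _
      nlinarith
    · -- M > 0 : the main case
      have hux₀ : |u x₀| = M := hx₀M
      have hx₀0 : 0 < x₀ := by
        rcases eq_or_lt_of_le hx₀mem.1 with h | h
        · exfalso; rw [← h, hu0, abs_zero] at hux₀; linarith
        · exact h
      have hx₀L : x₀ < L := by
        rcases eq_or_lt_of_le hx₀mem.2 with h | h
        · exfalso; rw [h, hupi, abs_zero] at hux₀; linarith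
        · exact h
      -- left side
      have hleft : K ^ (p - 1) * cothP p (K * x₀) ^ (p - 1) * M ^ p ≤
          ∫ x in (0:ℝ)..x₀, (|u' x| ^ p - lam * |u x| ^ p) := by
        have hsub : Icc (0:ℝ) x₀ ⊆ Icc 0 L := Icc_subset_Icc le_rfl hx₀L.le
        have := one_side hp hlam hK hx₀0 u u' (hu'.mono hsub)
          (fun x hx => ((huderiv x (hsub hx)).mono hsub)) hu0
        rwa [hux₀] at this
      -- right side via reflection
      set v : ℝ → ℝ := fun x => u (L - x) with hv
      set v' : ℝ → ℝ := fun x => -u' (L - x) with hv'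
      have hcL : 0 < L - x₀ := by linarith
      have hmaps : Set.MapsTo (fun x : ℝ => L - x) (Icc 0 (L - x₀)) (Icc 0 L) := by
        intro x hx
        constructor <;> simp at hx ⊢ <;> linarith [hx.1, hx.2]
      have hv'cont : ContinuousOn v' (Icc 0 (L - x₀)) := by
        apply ContinuousOn.neg
        exact hu'.comp (continuous_const.sub continuous_id).continuousOn hmaps
      have hvderiv : ∀ x ∈ Icc (0:ℝ) (L - x₀),
          HasDerivWithinAt v (v' x) (Icc 0 (L - x₀)) x := by
        intro x hx
        have h1 : HasDerivWithinAt u (u' (L - x)) (Icc 0 L) (L - x) :=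
          huderiv (L - x) (hmaps hx)
        have haff : HasDerivWithinAt (fun x : ℝ => L - x) (-1) (Icc 0 (L - x₀)) x :=
          ((hasDerivAt_id x).const_sub L).hasDerivWithinAt
        have := HasDerivWithinAt.comp x h1 haff hmaps
        have e : v' x = u' (L - x) * -1 := by
          simp only [hv']
          ring
        rw [e]
        exact this
      have hv0 : v 0 = 0 := by simp [hv, hupi]
      have hright : K ^ (p - 1) * cothP p (K * (L - x₀)) ^ (p - 1) * M ^ p ≤
          ∫ x in x₀..L, (|u' x| ^ p - lam * |u x| ^ p) := by
        have h := one_side hp hlam hK hcL v v' hv'cont hvderiv hv0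
        have hvc : |v (L - x₀)| = M := by
          simp only [hv]
          rw [show L - (L - x₀) = x₀ by ring, hux₀]
        rw [hvc] at h
        have heq : (∫ x in (0:ℝ)..(L - x₀), (|v' x| ^ p - lam * |v x| ^ p)) =
            ∫ x in x₀..L, (|u' x| ^ p - lam * |u x| ^ p) := by
          have h1 : (fun x => |v' x| ^ p - lam * |v x| ^ p) =
              fun x => (fun y => |u' y| ^ p - lam * |u y| ^ p) (L - x) := by
            funext x
            simp only [hv, hv', abs_neg]
          rw [h1, intervalIntegral.integral_comp_sub_left
            (fun y => |u' y| ^ p - lam * |u y| ^ p) L]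
          norm_num
        rwa [heq] at h
      -- convexity at the midpoint
      have hconv := w_convexOn hp hlam hK
      have hmid : K ^ (p - 1) * cothP p (K * (L / 2)) ^ (p - 1) ≤
          (1/2 : ℝ) * (K ^ (p - 1) * cothP p (K * x₀) ^ (p - 1)) +
          (1/2 : ℝ) * (K ^ (p - 1) * cothP p (K * (L - x₀)) ^ (p - 1)) := by
        have := hconv.2 (Set.mem_Ioi.2 hx₀0) (Set.mem_Ioi.2 hcL)
          (by norm_num : (0:ℝ) ≤ 1/2) (by norm_num : (0:ℝ) ≤ 1/2) (by norm_num)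
        have harg : (1/2 : ℝ) • x₀ + (1/2 : ℝ) • (L - x₀) = L / 2 := by
          simp only [smul_eq_mul]; ring
        rw [harg] at this
        exact this
      -- combine
      have hsplit : (∫ x in (0:ℝ)..x₀, (|u' x| ^ p - lam * |u x| ^ p)) +
          (∫ x in x₀..L, (|u' x| ^ p - lam * |u x| ^ p)) =
          ∫ x in (0:ℝ)..L, (|u' x| ^ p - lam * |u x| ^ p) := by
        apply intervalIntegral.integral_add_adjacent_intervals
        · apply ContinuousOn.intervalIntegrable
          apply ContinuousOn.mono _ (uIcc_sub (left_mem_Icc.2 hL.le) ⟨hx₀0.le, hx₀L.le⟩)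
          exact (habs_cont.comp_continuousOn hu').sub
            (continuousOn_const.mul (habs_cont.comp_continuousOn hu_cont))
        · apply ContinuousOn.intervalIntegrable
          apply ContinuousOn.mono _ (uIcc_sub ⟨hx₀0.le, hx₀L.le⟩ (right_mem_Icc.2 hL.le))
          exact (habs_cont.comp_continuousOn hu').sub
            (continuousOn_const.mul (habs_cont.comp_continuousOn hu_cont))
      have hMp : 0 ≤ M ^ p := Real.rpow_nonneg hM0 _
      have harg2 : K * L / 2 = K * (L / 2) := by ring
      rw [hRHS, harg2, ← hsplit]
      calc 2 * K ^ (p - 1) * cothP p (K * (L / 2)) ^ (p - 1) * M ^ p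
          ≤ ((K ^ (p - 1) * cothP p (K * x₀) ^ (p - 1)) +
              (K ^ (p - 1) * cothP p (K * (L - x₀)) ^ (p - 1))) * M ^ p := by
            apply mul_le_mul_of_nonneg_right _ hMp
            nlinarith [hmid]
        _ = K ^ (p - 1) * cothP p (K * x₀) ^ (p - 1) * M ^ p +
              K ^ (p - 1) * cothP p (K * (L - x₀)) ^ (p - 1) * M ^ p := by ring
        _ ≤ _ := add_le_add hleft hright
end assemble
end

section
/- Let 1 < p < ∞, λ < 0, K = (−λ/(p−1))^{1/p}, and y ∈ (0,π_p/2]. Define u_y : [0,π_p] → ℝ by u_y(x) = sinh_p(Kx)/sinh_p(Ky) for x ∈ [0,y] and u_y(x) = sinh_p(K(π_p−x))/sinh_p(K(π_p−y)) for x ∈ [y,π_p]. Then ∫₀^{π_p} |u_y′(x)|^p dx − λ∫₀^{π_p} |u_y(x)|^p dx = K^{p−1}·((coth_p(Ky))^{p−1} + (coth_p(K(π_p−y)))^{p−1}), where the integrals are taken piecewise on [0,y] and [y,π_p]. -/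
/-- The function `u_y(x) = sinh_p (K x)/sinh_p (K y)` on `[0, y]`,
`u_y(x) = sinh_p (K (π_p - x))/sinh_p (K (π_p - y))` on `[y, π_p]`. -/
noncomputable def uYh (p K y x : ℝ) : ℝ :=
  if x ≤ y then sinhP p (K * x) / sinhP p (K * y)
  else sinhP p (K * (piP p - x)) / sinhP p (K * (piP p - y))

open Real Set Filter MeasureTheory intervalIntegral Topology
open scoped Interval

namespace PTrigAux

/-- The integrand defining `arcsinhP`. -/
noncomputable def fP (p t : ℝ) : ℝ := (1 + t ^ p) ^ (-(1 / p))

variable {p : ℝ}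

lemma base_pos (hp : 1 < p) {t : ℝ} (ht : 0 ≤ t) : (0:ℝ) < 1 + t ^ p :=
  add_pos_of_pos_of_nonneg one_pos (Real.rpow_nonneg ht p)

lemma fP_pos (hp : 1 < p) {t : ℝ} (ht : 0 ≤ t) : 0 < fP p t :=
  Real.rpow_pos_of_pos (base_pos hp ht) _

lemma fP_nonneg (hp : 1 < p) {t : ℝ} (ht : 0 ≤ t) : 0 ≤ fP p t := (fP_pos hp ht).le

lemma base_continuous (hp : 1 < p) : Continuous (fun t : ℝ => 1 + t ^ p) :=
  continuous_const.add (Real.continuous_rpow_const (by linarith))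

lemma fP_contAt (hp : 1 < p) {t : ℝ} (ht : (0:ℝ) < 1 + t ^ p) : ContinuousAt (fP p) t :=
  ((base_continuous hp).continuousAt).rpow_const (Or.inl ht.ne')

lemma isOpen_U (hp : 1 < p) : IsOpen {t : ℝ | (0:ℝ) < 1 + t ^ p} :=
  isOpen_lt continuous_const (base_continuous hp)

lemma fP_intble (hp : 1 < p) {a b : ℝ} (ha : 0 ≤ a) (hb : 0 ≤ b) :
    IntervalIntegrable (fP p) volume a b := by
  apply ContinuousOn.intervalIntegrable
  intro t ht
  have ht0 : 0 ≤ t := by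
    rcases le_total a b with h | h
    · rw [uIcc_of_le h] at ht; exact le_trans ha ht.1
    · rw [uIcc_of_ge h] at ht; exact le_trans hb ht.1
  exact (fP_contAt hp (base_pos hp ht0)).continuousWithinAt

lemma arcsinhP_hasDerivAt (hp : 1 < p) {x : ℝ} (hx : 0 ≤ x) :
    HasDerivAt (arcsinhP p) (fP p x) x := by
  have hmeas : StronglyMeasurableAtFilter (fP p) (𝓝 x) volume := by
    refine ⟨{t : ℝ | (0:ℝ) < 1 + t ^ p}, (isOpen_U hp).mem_nhds (base_pos hp hx), ?_⟩
    exact (continuousOn_of_forall_continuousAt fun t ht => fP_contAt hp ht).aestronglyMeasurable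
      (isOpen_U hp).measurableSet
  have := intervalIntegral.integral_hasDerivAt_right (fP_intble hp le_rfl hx) hmeas
    (fP_contAt hp (base_pos hp hx))
  have heq : arcsinhP p = fun u => ∫ t in (0:ℝ)..u, fP p t := rfl
  rw [heq]
  exact this

lemma arcsinhP_zero : arcsinhP p 0 = 0 := intervalIntegral.integral_same

lemma arcsinhP_contAt (hp : 1 < p) {x : ℝ} (hx : 0 ≤ x) : ContinuousAt (arcsinhP p) x :=
  (arcsinhP_hasDerivAt hp hx).continuousAt

lemma arcsinhP_strictMonoOn (hp : 1 < p) : StrictMonoOn (arcsinhP p) (Ici 0) := by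
  apply strictMonoOn_of_deriv_pos (convex_Ici 0)
    (fun x hx => (arcsinhP_contAt hp hx).continuousWithinAt)
  intro x hx
  rw [interior_Ici] at hx
  rw [(arcsinhP_hasDerivAt hp hx.le).deriv]
  exact fP_pos hp hx.le

lemma arcsinhP_nonneg (hp : 1 < p) {x : ℝ} (hx : 0 ≤ x) : 0 ≤ arcsinhP p x :=
  intervalIntegral.integral_nonneg hx fun u hu => fP_nonneg hp hu.1

lemma arcsinhP_large (hp : 1 < p) {x : ℝ} (hx : 1 ≤ x) :
    (2:ℝ) ^ (-(1/p)) * Real.log x ≤ arcsinhP p x := by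
  have h0x : (0:ℝ) ≤ x := by linarith
  have hsplit : arcsinhP p x = (∫ t in (0:ℝ)..1, fP p t) + ∫ t in (1:ℝ)..x, fP p t := by
    rw [intervalIntegral.integral_add_adjacent_intervals (fP_intble hp le_rfl zero_le_one)
      (fP_intble hp zero_le_one h0x)]
    rfl
  have h1 : 0 ≤ ∫ t in (0:ℝ)..1, fP p t :=
    intervalIntegral.integral_nonneg zero_le_one fun u hu => fP_nonneg hp hu.1
  have h2 : (2:ℝ) ^ (-(1/p)) * Real.log x ≤ ∫ t in (1:ℝ)..x, fP p t := by
    have hlog : (2:ℝ) ^ (-(1/p)) * Real.log x = ∫ t in (1:ℝ)..x, (2:ℝ) ^ (-(1/p)) * t⁻¹ := by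
      rw [intervalIntegral.integral_const_mul, integral_inv_of_pos one_pos (by linarith),
        div_one]
    rw [hlog]
    have hcont : IntervalIntegrable (fun t : ℝ => (2:ℝ) ^ (-(1/p)) * t⁻¹) volume 1 x := by
      apply ContinuousOn.intervalIntegrable
      apply continuousOn_const.mul
      apply continuousOn_inv₀.mono
      intro t ht
      rw [uIcc_of_le hx] at ht
      exact ne_of_gt (by linarith [ht.1])
    apply intervalIntegral.integral_mono_on hx hcont (fP_intble hp zero_le_one h0x)
    intro t ht
    have ht1 : (1:ℝ) ≤ t := ht.1
    have ht0 : (0:ℝ) < t := by linarith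
    have htp : (1:ℝ) ≤ t ^ p := by
      have := Real.rpow_le_rpow zero_le_one ht1 (by linarith : (0:ℝ) ≤ p)
      simpa using this
    have hle : (1:ℝ) + t ^ p ≤ 2 * t ^ p := by linarith
    have hineq : ((2:ℝ) * t ^ p) ^ (-(1/p)) ≤ (1 + t ^ p) ^ (-(1/p)) :=
      Real.rpow_le_rpow_of_nonpos (base_pos hp ht0.le) hle
        (by rw [neg_nonpos]; positivity)
    have hexp : p * (-(1/p)) = -1 := by field_simp
    calc (2:ℝ) ^ (-(1/p)) * t⁻¹ = ((2:ℝ) * t ^ p) ^ (-(1/p)) := by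
          rw [Real.mul_rpow (by norm_num) (Real.rpow_nonneg ht0.le p),
            ← Real.rpow_mul ht0.le, hexp, Real.rpow_neg_one]
      _ ≤ fP p t := hineq
  linarith [hsplit]

lemma arcsinhP_surj (hp : 1 < p) {z : ℝ} (hz : 0 ≤ z) :
    ∃ x, 0 ≤ x ∧ arcsinhP p x = z := by
  set x₀ : ℝ := Real.exp ((2:ℝ) ^ (1/p) * z) with hx₀
  have hx₀1 : (1:ℝ) ≤ x₀ := Real.one_le_exp (by positivity)
  have hbig : z ≤ arcsinhP p x₀ := by
    have h1 := arcsinhP_large hp hx₀1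
    have hlog : Real.log x₀ = (2:ℝ) ^ (1/p) * z := Real.log_exp _
    have h2 : (2:ℝ) ^ (-(1/p)) * ((2:ℝ) ^ (1/p) * z) = z := by
      rw [← mul_assoc, ← Real.rpow_add two_pos]
      norm_num
    rw [hlog, h2] at h1
    exact h1
  have hcont : ContinuousOn (arcsinhP p) (Icc 0 x₀) :=
    fun t ht => (arcsinhP_contAt hp ht.1).continuousWithinAt
  have hmem : z ∈ Icc (arcsinhP p 0) (arcsinhP p x₀) := by
    rw [arcsinhP_zero]; exact ⟨hz, hbig⟩
  obtain ⟨x, hx, hxz⟩ := intermediate_value_Icc (by linarith : (0:ℝ) ≤ x₀) hcont hmem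
  exact ⟨x, hx.1, hxz⟩

lemma sinhP_arcsinhP (hp : 1 < p) {x : ℝ} (hx : 0 ≤ x) : sinhP p (arcsinhP p x) = x :=
  (arcsinhP_strictMonoOn hp).injOn.leftInvOn_invFunOn hx

lemma arcsinhP_sinhP (hp : 1 < p) {z : ℝ} (hz : 0 ≤ z) : arcsinhP p (sinhP p z) = z := by
  obtain ⟨x, hx, hxz⟩ := arcsinhP_surj hp hz
  exact Function.invFunOn_eq ⟨x, hx, hxz⟩

lemma sinhP_nonneg (hp : 1 < p) {z : ℝ} (hz : 0 ≤ z) : 0 ≤ sinhP p z := by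
  obtain ⟨x, hx, hxz⟩ := arcsinhP_surj hp hz
  exact Function.invFunOn_mem (f := arcsinhP p) ⟨x, hx, hxz⟩

lemma sinhP_zero (hp : 1 < p) : sinhP p 0 = 0 := by
  have h := sinhP_arcsinhP hp (le_refl (0:ℝ))
  rwa [arcsinhP_zero] at h

lemma sinhP_pos (hp : 1 < p) {z : ℝ} (hz : 0 < z) : 0 < sinhP p z := by
  rcases (sinhP_nonneg hp hz.le).lt_or_eq with h | h
  · exact h
  · exfalso
    have := arcsinhP_sinhP hp hz.le
    rw [← h, arcsinhP_zero] at this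
    linarith

lemma sinhP_monotoneOn (hp : 1 < p) : MonotoneOn (sinhP p) (Ici 0) := by
  intro a ha b hb hab
  by_contra h
  push_neg at h
  have := (arcsinhP_strictMonoOn hp) (sinhP_nonneg hp hb) (sinhP_nonneg hp ha) h
  rw [arcsinhP_sinhP hp ha, arcsinhP_sinhP hp hb] at this
  exact absurd hab (not_le.2 this)

lemma sinhP_image (hp : 1 < p) : Ici (0:ℝ) ⊆ sinhP p '' (Ici 0) := by
  intro x hx
  exact ⟨arcsinhP p x, arcsinhP_nonneg hp hx, sinhP_arcsinhP hp hx⟩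

lemma sinhP_contAt (hp : 1 < p) {z : ℝ} (hz : 0 < z) : ContinuousAt (sinhP p) z := by
  apply continuousAt_of_monotoneOn_of_image_mem_nhds (sinhP_monotoneOn hp) (Ici_mem_nhds hz)
  exact mem_of_superset (Ici_mem_nhds (sinhP_pos hp hz)) (sinhP_image hp)

lemma sinhP_continuousOn (hp : 1 < p) : ContinuousOn (sinhP p) (Ici 0) := by
  intro z hz
  rcases (show (0:ℝ) ≤ z from hz).lt_or_eq with h | h
  · exact (sinhP_contAt hp h).continuousWithinAt
  · subst h
    have h0 : sinhP p (0:ℝ) = 0 := sinhP_zero hp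
    apply continuousWithinAt_right_of_monotoneOn_of_image_mem_nhdsWithin (sinhP_monotoneOn hp)
      self_mem_nhdsWithin
    rw [h0]
    exact mem_of_superset self_mem_nhdsWithin (sinhP_image hp)

lemma coshP_eq (hp : 1 < p) {z : ℝ} : coshP p z = (1 + sinhP p z ^ p) ^ (1/p) := rfl

lemma coshP_pos (hp : 1 < p) {z : ℝ} (hz : 0 ≤ z) : 0 < coshP p z :=
  Real.rpow_pos_of_pos (base_pos hp (sinhP_nonneg hp hz)) _

lemma coshP_rpow (hp : 1 < p) {z : ℝ} (hz : 0 ≤ z) : coshP p z ^ p = 1 + sinhP p z ^ p := by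
  rw [coshP, ← Real.rpow_mul (base_pos hp (sinhP_nonneg hp hz)).le,
    one_div_mul_cancel (by linarith : p ≠ 0), Real.rpow_one]

lemma sinhP_hasDerivAt (hp : 1 < p) {z : ℝ} (hz : 0 < z) :
    HasDerivAt (sinhP p) (coshP p z) z := by
  have hx : 0 < sinhP p z := sinhP_pos hp hz
  have hf : HasDerivAt (arcsinhP p) (fP p (sinhP p z)) (sinhP p z) :=
    arcsinhP_hasDerivAt hp hx.le
  have hev : ∀ᶠ w in 𝓝 z, arcsinhP p (sinhP p w) = w := by
    filter_upwards [Ioi_mem_nhds hz] with w hw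
    exact arcsinhP_sinhP hp (le_of_lt hw)
  have h := HasDerivAt.of_local_left_inverse (sinhP_contAt hp hz) hf (fP_pos hp hx.le).ne' hev
  have heq : (fP p (sinhP p z))⁻¹ = coshP p z := by
    rw [fP, Real.rpow_neg (base_pos hp hx.le).le, inv_inv, coshP]
  rwa [heq] at h

lemma key_hasDerivAt (hp : 1 < p) {z : ℝ} (hz : 0 < z) :
    HasDerivAt (fun w => sinhP p w * coshP p w ^ (p - 1)) (1 + p * sinhP p z ^ p) z := by
  have hp0 : (0:ℝ) < p := by linarith
  have hs0 : 0 < sinhP p z := sinhP_pos hp hz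
  have hc0 : 0 < coshP p z := coshP_pos hp hz.le
  have hs : HasDerivAt (sinhP p) (coshP p z) z := sinhP_hasDerivAt hp hz
  have hsp : HasDerivAt (fun w => sinhP p w ^ p) (coshP p z * p * sinhP p z ^ (p - 1)) z :=
    hs.rpow_const (Or.inr hp.le)
  have h1 : HasDerivAt (fun w => 1 + sinhP p w ^ p)
      (coshP p z * p * sinhP p z ^ (p - 1)) z := by
    simpa using (hsp.const_add 1)
  have hbase : (0:ℝ) < 1 + sinhP p z ^ p := base_pos hp hs0.le
  have hc : HasDerivAt (coshP p)
      ((coshP p z * p * sinhP p z ^ (p - 1)) * (1/p) * (1 + sinhP p z ^ p) ^ (1/p - 1)) z := by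
    have := h1.rpow_const (p := 1/p) (Or.inl hbase.ne')
    exact this
  have hcp : HasDerivAt (fun w => coshP p w ^ (p - 1))
      ((coshP p z * p * sinhP p z ^ (p - 1)) * (1/p) * (1 + sinhP p z ^ p) ^ (1/p - 1) * (p - 1)
        * coshP p z ^ (p - 1 - 1)) z :=
    hc.rpow_const (Or.inl hc0.ne')
  have hmul := hs.mul hcp
  have e1 : coshP p z * coshP p z ^ (p - 1) = 1 + sinhP p z ^ p := by
    have h : coshP p z * coshP p z ^ (p - 1) = coshP p z ^ ((1:ℝ) + (p - 1)) := by
      rw [Real.rpow_add hc0, Real.rpow_one]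
    rw [h, show (1:ℝ) + (p - 1) = p by ring, coshP_rpow hp hz.le]
  have e2 : (1 + sinhP p z ^ p) ^ (1/p - 1) = coshP p z ^ (1 - p) := by
    rw [← coshP_rpow hp hz.le, ← Real.rpow_mul hc0.le]
    congr 1
    field_simp
  have e3 : sinhP p z * sinhP p z ^ (p - 1) = sinhP p z ^ p := by
    have h : sinhP p z * sinhP p z ^ (p - 1) = sinhP p z ^ ((1:ℝ) + (p - 1)) := by
      rw [Real.rpow_add hs0, Real.rpow_one]
    rw [h, show (1:ℝ) + (p - 1) = p by ring]
  have e4 : coshP p z * (coshP p z ^ (1 - p) * coshP p z ^ (p - 1 - 1)) = 1 := by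
    rw [← Real.rpow_add hc0, show (1:ℝ) - p + (p - 1 - 1) = -1 by ring, Real.rpow_neg_one]
    exact mul_inv_cancel₀ hc0.ne'
  have halg : coshP p z * coshP p z ^ (p - 1) + sinhP p z *
      ((coshP p z * p * sinhP p z ^ (p - 1)) * (1/p) * (1 + sinhP p z ^ p) ^ (1/p - 1) * (p - 1)
        * coshP p z ^ (p - 1 - 1)) = 1 + p * sinhP p z ^ p := by
    rw [e2]
    have h5 : sinhP p z *
        ((coshP p z * p * sinhP p z ^ (p - 1)) * (1/p) * coshP p z ^ (1 - p) * (p - 1)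
          * coshP p z ^ (p - 1 - 1))
        = (p * (1/p)) * ((p - 1) * ((sinhP p z * sinhP p z ^ (p - 1)) *
            (coshP p z * (coshP p z ^ (1 - p) * coshP p z ^ (p - 1 - 1))))) := by
      ring
    rw [h5, e3, e4, e1, mul_one_div_cancel hp0.ne']
    ring
  rw [← halg]
  exact hmul

lemma coshP_continuousOn (hp : 1 < p) : ContinuousOn (coshP p) (Ici 0) := by
  have h1 : ContinuousOn (fun z => 1 + sinhP p z ^ p) (Ici 0) :=
    continuousOn_const.add ((sinhP_continuousOn hp).rpow_const
      (fun x _ => Or.inr (by linarith)))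
  exact h1.rpow_const (fun x _ => Or.inr (by positivity))

lemma core (hp : 1 < p) {b : ℝ} (hb : 0 < b) :
    ∫ z in (0:ℝ)..b, (1 + p * sinhP p z ^ p) = sinhP p b * coshP p b ^ (p - 1) := by
  have hIcc : Icc (0:ℝ) b ⊆ Ici 0 := fun t ht => ht.1
  have hcontA : ContinuousOn (fun z => sinhP p z * coshP p z ^ (p - 1)) (Icc 0 b) :=
    ((sinhP_continuousOn hp).mono hIcc).mul
      (((coshP_continuousOn hp).mono hIcc).rpow_const (fun x _ => Or.inr (by linarith)))
  have hcontf : ContinuousOn (fun z : ℝ => 1 + p * sinhP p z ^ p) (Icc 0 b) := by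
    apply continuousOn_const.add
    apply continuousOn_const.mul
    exact ((sinhP_continuousOn hp).mono hIcc).rpow_const (fun x _ => Or.inr (by linarith))
  have hint : IntervalIntegrable (fun z : ℝ => 1 + p * sinhP p z ^ p) volume 0 b :=
    ContinuousOn.intervalIntegrable (by rwa [uIcc_of_le hb.le])
  have := intervalIntegral.integral_eq_sub_of_hasDeriv_right_of_le hb.le hcontA
    (fun x hx => (key_hasDerivAt hp hx.1).hasDerivWithinAt) hint
  rw [this, sinhP_zero hp]
  ring

lemma piece (hp : 1 < p) {K b : ℝ} (hKpos : 0 < K) (hb : 0 < b) :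
    ∫ x in (0:ℝ)..b, ((K * coshP p (K * x) / sinhP p (K * b)) ^ p
      + (p - 1) * K ^ p * (sinhP p (K * x) / sinhP p (K * b)) ^ p)
      = K ^ (p - 1) * cothP p (K * b) ^ (p - 1) := by
  have hKb : 0 < K * b := mul_pos hKpos hb
  set S := sinhP p (K * b) with hSdef
  have hS : 0 < S := sinhP_pos hp hKb
  have hKp : K ^ p = K ^ (p - 1) * K := by
    have h : K ^ (p - 1) * K ^ (1:ℝ) = K ^ (p - 1 + 1) := (Real.rpow_add hKpos _ _).symm
    rw [Real.rpow_one] at h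
    rw [h, show p - 1 + 1 = p by ring]
  have hstep : ∀ x ∈ uIcc (0:ℝ) b,
      ((K * coshP p (K * x) / S) ^ p + (p - 1) * K ^ p * (sinhP p (K * x) / S) ^ p)
        = (K ^ (p - 1) / S ^ p) * (K * (1 + p * sinhP p (K * x) ^ p)) := by
    intro x hx
    rw [uIcc_of_le hb.le] at hx
    have hx0 : 0 ≤ K * x := mul_nonneg hKpos.le hx.1
    have hs0 : 0 ≤ sinhP p (K * x) := sinhP_nonneg hp hx0
    have hc0 : 0 < coshP p (K * x) := coshP_pos hp hx0
    have e1 : (K * coshP p (K * x) / S) ^ p = K ^ p * coshP p (K * x) ^ p / S ^ p := by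
      rw [Real.div_rpow (by positivity) hS.le, Real.mul_rpow hKpos.le hc0.le]
    have e2 : (sinhP p (K * x) / S) ^ p = sinhP p (K * x) ^ p / S ^ p := by
      rw [Real.div_rpow hs0 hS.le]
    rw [e1, e2, coshP_rpow hp hx0, hKp]
    field_simp
    ring
  rw [intervalIntegral.integral_congr hstep, intervalIntegral.integral_const_mul]
  have hcomp : ∫ x in (0:ℝ)..b, K * (1 + p * sinhP p (K * x) ^ p)
      = ∫ z in (0:ℝ)..(K * b), (1 + p * sinhP p z ^ p) := by
    have := intervalIntegral.smul_integral_comp_mul_left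
      (fun z : ℝ => 1 + p * sinhP p z ^ p) K (a := 0) (b := b)
    rw [mul_zero] at this
    rw [← this, smul_eq_mul, intervalIntegral.integral_const_mul]
  rw [hcomp, core hp hKb]
  have hcS : 0 < coshP p (K * b) := coshP_pos hp hKb.le
  have hSp : S ^ p = S ^ (p - 1) * S := by
    have h : S ^ (p - 1) * S ^ (1:ℝ) = S ^ (p - 1 + 1) := (Real.rpow_add hS _ _).symm
    rw [Real.rpow_one] at h
    rw [h, show p - 1 + 1 = p by ring]
  rw [cothP, Real.div_rpow hcS.le hS.le, hSp]
  have hSp1 : (0:ℝ) < S ^ (p - 1) := Real.rpow_pos_of_pos hS _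
  field_simp
  ring

lemma contOn_pow_cosh (hp : 1 < p) {K c q : ℝ} (hK : 0 ≤ K) (hq : 0 ≤ q) :
    ContinuousOn (fun x : ℝ => (K * coshP p (K * x) / c) ^ q) (Ici 0) := by
  apply ContinuousOn.rpow_const _ (fun x _ => Or.inr hq)
  apply ContinuousOn.div_const
  apply continuousOn_const.mul
  exact (coshP_continuousOn hp).comp (continuous_const.mul continuous_id).continuousOn
    (fun x hx => mul_nonneg hK hx)

lemma contOn_pow_sinh (hp : 1 < p) {K c q : ℝ} (hK : 0 ≤ K) (hq : 0 ≤ q) :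
    ContinuousOn (fun x : ℝ => (sinhP p (K * x) / c) ^ q) (Ici 0) := by
  apply ContinuousOn.rpow_const _ (fun x _ => Or.inr hq)
  apply ContinuousOn.div_const
  exact (sinhP_continuousOn hp).comp (continuous_const.mul continuous_id).continuousOn
    (fun x hx => mul_nonneg hK hx)

end PTrigAux

/-- For `λ < 0`, `K = (-λ/(p-1))^(1/p)` and `y ∈ (0, π_p/2]`,
`∫ |u_y'|^p - λ ∫ |u_y|^p = K^(p-1) ((coth_p (K y))^(p-1) + (coth_p (K(π_p - y)))^(p-1))`. -/
theorem J_uYh_eq (p lam K y : ℝ) (hp : 1 < p) (hlam : lam < 0)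
    (hK : K = (-lam / (p - 1)) ^ (1 / p))
    (hy0 : 0 < y) (hy : y ≤ piP p / 2) :
    (∫ x in (0:ℝ)..piP p, |deriv (uYh p K y) x| ^ p) -
        lam * ∫ x in (0:ℝ)..piP p, |uYh p K y x| ^ p =
      K ^ (p - 1) * ((cothP p (K * y)) ^ (p - 1) + (cothP p (K * (piP p - y))) ^ (p - 1)) := by
  open PTrigAux in
  have hp0 : (0:ℝ) < p := by linarith
  have hp1 : (0:ℝ) < p - 1 := by linarith
  have hKpos : 0 < K := by
    rw [hK]
    exact Real.rpow_pos_of_pos (div_pos (neg_pos.2 hlam) hp1) _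
  have hKp : K ^ p = -lam / (p - 1) := by
    rw [hK, ← Real.rpow_mul (le_of_lt (div_pos (neg_pos.2 hlam) hp1)),
      one_div_mul_cancel (by linarith : p ≠ 0), Real.rpow_one]
  have hlam_eq : -lam = (p - 1) * K ^ p := by
    rw [hKp]
    field_simp
  have h2y : 2 * y ≤ piP p := by linarith
  have hb2 : 0 < piP p - y := by linarith
  have hyπ : y < piP p := by linarith
  have hS₁pos : 0 < sinhP p (K * y) := PTrigAux.sinhP_pos hp (mul_pos hKpos hy0)
  have hS₂pos : 0 < sinhP p (K * (piP p - y)) := PTrigAux.sinhP_pos hp (mul_pos hKpos hb2)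
  -- derivative on the two open intervals
  have hder₁ : ∀ x ∈ Ioo 0 y, deriv (uYh p K y) x
      = K * coshP p (K * x) / sinhP p (K * y) := by
    intro x hx
    have hev : uYh p K y =ᶠ[𝓝 x] fun w => sinhP p (K * w) / sinhP p (K * y) := by
      filter_upwards [Iio_mem_nhds hx.2] with w hw
      simp only [uYh, if_pos (le_of_lt (Set.mem_Iio.1 hw))]
    rw [hev.deriv_eq]
    have hKx : 0 < K * x := mul_pos hKpos hx.1
    have hinner : HasDerivAt (fun w : ℝ => K * w) K x := by
      simpa using (hasDerivAt_id x).const_mul K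
    have h2 : HasDerivAt (fun w => sinhP p (K * w) / sinhP p (K * y))
        (coshP p (K * x) * K / sinhP p (K * y)) x :=
      ((PTrigAux.sinhP_hasDerivAt hp hKx).comp x hinner).div_const _
    rw [h2.deriv]
    ring
  have hder₂ : ∀ x ∈ Ioo y (piP p), deriv (uYh p K y) x
      = -(K * coshP p (K * (piP p - x))) / sinhP p (K * (piP p - y)) := by
    intro x hx
    have hev : uYh p K y =ᶠ[𝓝 x]
        fun w => sinhP p (K * (piP p - w)) / sinhP p (K * (piP p - y)) := by
      filter_upwards [Ioi_mem_nhds hx.1] with w hw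
      simp only [uYh, if_neg (not_le.2 (Set.mem_Ioi.1 hw))]
    rw [hev.deriv_eq]
    have hKx : 0 < K * (piP p - x) := mul_pos hKpos (by linarith [hx.2])
    have hinner : HasDerivAt (fun w : ℝ => K * (piP p - w)) (-K) x := by
      simpa using ((hasDerivAt_id x).const_sub (piP p)).const_mul K
    have h2 : HasDerivAt (fun w => sinhP p (K * (piP p - w)) / sinhP p (K * (piP p - y)))
        (coshP p (K * (piP p - x)) * (-K) / sinhP p (K * (piP p - y))) x :=
      ((PTrigAux.sinhP_hasDerivAt hp hKx).comp x hinner).div_const _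
    rw [h2.deriv]
    ring
  -- a.e. statements for singletons
  have hy_ae : ∀ᵐ x : ℝ, x ≠ y := by
    refine (MeasureTheory.ae_iff).2 ?_
    have h : {a : ℝ | ¬ a ≠ y} = {y} := by ext a; simp
    rw [h]
    exact measure_singleton y
  have hπ_ae : ∀ᵐ x : ℝ, x ≠ piP p := by
    refine (MeasureTheory.ae_iff).2 ?_
    have h : {a : ℝ | ¬ a ≠ piP p} = {piP p} := by ext a; simp
    rw [h]
    exact measure_singleton _
  -- a.e. identification of the integrands on each half
  have haeD₁ : ∀ᵐ x : ℝ, x ∈ Ι (0:ℝ) y → |deriv (uYh p K y) x| ^ p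
      = (K * coshP p (K * x) / sinhP p (K * y)) ^ p := by
    filter_upwards [hy_ae] with x hxy hx
    rw [Set.uIoc_of_le hy0.le] at hx
    have hxo : x ∈ Ioo 0 y := ⟨hx.1, lt_of_le_of_ne hx.2 hxy⟩
    rw [hder₁ x hxo, abs_of_pos]
    exact div_pos (mul_pos hKpos (PTrigAux.coshP_pos hp (mul_nonneg hKpos.le hxo.1.le))) hS₁pos
  have haeD₂ : ∀ᵐ x : ℝ, x ∈ Ι y (piP p) → |deriv (uYh p K y) x| ^ p
      = (K * coshP p (K * (piP p - x)) / sinhP p (K * (piP p - y))) ^ p := by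
    filter_upwards [hπ_ae] with x hxπ hx
    rw [Set.uIoc_of_le hyπ.le] at hx
    have hxo : x ∈ Ioo y (piP p) := ⟨hx.1, lt_of_le_of_ne hx.2 hxπ⟩
    rw [hder₂ x hxo, neg_div, abs_neg, abs_of_pos]
    exact div_pos (mul_pos hKpos
      (PTrigAux.coshP_pos hp (mul_nonneg hKpos.le (by linarith [hxo.2])))) hS₂pos
  have haeU₁ : ∀ᵐ x : ℝ, x ∈ Ι (0:ℝ) y → |uYh p K y x| ^ p
      = (sinhP p (K * x) / sinhP p (K * y)) ^ p := by
    apply Filter.Eventually.of_forall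
    intro x hx
    rw [Set.uIoc_of_le hy0.le] at hx
    rw [uYh, if_pos hx.2, abs_of_nonneg]
    exact div_nonneg (PTrigAux.sinhP_nonneg hp (mul_nonneg hKpos.le hx.1.le)) hS₁pos.le
  have haeU₂ : ∀ᵐ x : ℝ, x ∈ Ι y (piP p) → |uYh p K y x| ^ p
      = (sinhP p (K * (piP p - x)) / sinhP p (K * (piP p - y))) ^ p := by
    apply Filter.Eventually.of_forall
    intro x hx
    rw [Set.uIoc_of_le hyπ.le] at hx
    rw [uYh, if_neg (not_le.2 hx.1), abs_of_nonneg]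
    exact div_nonneg (PTrigAux.sinhP_nonneg hp
      (mul_nonneg hKpos.le (by linarith [hx.2]))) hS₂pos.le
  -- integrability of the explicit integrands
  have hG₁int : IntervalIntegrable
      (fun x => (K * coshP p (K * x) / sinhP p (K * y)) ^ p) volume 0 y := by
    apply ContinuousOn.intervalIntegrable
    rw [uIcc_of_le hy0.le]
    exact (PTrigAux.contOn_pow_cosh hp hKpos.le hp0.le).mono (fun t ht => ht.1)
  have hH₁int : IntervalIntegrable
      (fun x => (sinhP p (K * x) / sinhP p (K * y)) ^ p) volume 0 y := by
    apply ContinuousOn.intervalIntegrable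
    rw [uIcc_of_le hy0.le]
    exact (PTrigAux.contOn_pow_sinh hp hKpos.le hp0.le).mono (fun t ht => ht.1)
  have hmapsto : MapsTo (fun x : ℝ => piP p - x) (Icc y (piP p)) (Ici 0) :=
    fun x hx => sub_nonneg.2 hx.2
  have hG₂int : IntervalIntegrable
      (fun x => (K * coshP p (K * (piP p - x)) / sinhP p (K * (piP p - y))) ^ p)
      volume y (piP p) := by
    apply ContinuousOn.intervalIntegrable
    rw [uIcc_of_le hyπ.le]
    exact (PTrigAux.contOn_pow_cosh hp hKpos.le hp0.le).comp
      (continuous_const.sub continuous_id).continuousOn hmapsto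
  have hH₂int : IntervalIntegrable
      (fun x => (sinhP p (K * (piP p - x)) / sinhP p (K * (piP p - y))) ^ p)
      volume y (piP p) := by
    apply ContinuousOn.intervalIntegrable
    rw [uIcc_of_le hyπ.le]
    exact (PTrigAux.contOn_pow_sinh hp hKpos.le hp0.le).comp
      (continuous_const.sub continuous_id).continuousOn hmapsto
  -- integrability of the original integrands
  have hDint₁ : IntervalIntegrable (fun x => |deriv (uYh p K y) x| ^ p) volume 0 y :=
    hG₁int.congr_ae ((ae_restrict_iff' measurableSet_uIoc).2
      (haeD₁.mono fun x h hx => (h hx).symm))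
  have hDint₂ : IntervalIntegrable (fun x => |deriv (uYh p K y) x| ^ p) volume y (piP p) :=
    hG₂int.congr_ae ((ae_restrict_iff' measurableSet_uIoc).2
      (haeD₂.mono fun x h hx => (h hx).symm))
  have hUint₁ : IntervalIntegrable (fun x => |uYh p K y x| ^ p) volume 0 y :=
    hH₁int.congr_ae ((ae_restrict_iff' measurableSet_uIoc).2
      (haeU₁.mono fun x h hx => (h hx).symm))
  have hUint₂ : IntervalIntegrable (fun x => |uYh p K y x| ^ p) volume y (piP p) :=
    hH₂int.congr_ae ((ae_restrict_iff' measurableSet_uIoc).2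
      (haeU₂.mono fun x h hx => (h hx).symm))
  -- split integrals and identify
  have hsplitD : ∫ x in (0:ℝ)..piP p, |deriv (uYh p K y) x| ^ p
      = (∫ x in (0:ℝ)..y, |deriv (uYh p K y) x| ^ p)
        + ∫ x in y..piP p, |deriv (uYh p K y) x| ^ p :=
    (intervalIntegral.integral_add_adjacent_intervals hDint₁ hDint₂).symm
  have hsplitU : ∫ x in (0:ℝ)..piP p, |uYh p K y x| ^ p
      = (∫ x in (0:ℝ)..y, |uYh p K y x| ^ p) + ∫ x in y..piP p, |uYh p K y x| ^ p :=
    (intervalIntegral.integral_add_adjacent_intervals hUint₁ hUint₂).symm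
  have e1 := intervalIntegral.integral_congr_ae haeD₁
  have e2 := intervalIntegral.integral_congr_ae haeD₂
  have e3 := intervalIntegral.integral_congr_ae haeU₁
  have e4 := intervalIntegral.integral_congr_ae haeU₂
  rw [hsplitD, hsplitU, e1, e2, e3, e4]
  -- change of variables on the second halves
  have sub₁ : ∫ x in y..piP p,
      (K * coshP p (K * (piP p - x)) / sinhP p (K * (piP p - y))) ^ p
      = ∫ x in (0:ℝ)..(piP p - y),
        (K * coshP p (K * x) / sinhP p (K * (piP p - y))) ^ p := by
    have h := intervalIntegral.integral_comp_sub_left (a := y) (b := piP p)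
      (fun u => (K * coshP p (K * u) / sinhP p (K * (piP p - y))) ^ p) (piP p)
    simpa using h
  have sub₂ : ∫ x in y..piP p,
      (sinhP p (K * (piP p - x)) / sinhP p (K * (piP p - y))) ^ p
      = ∫ x in (0:ℝ)..(piP p - y),
        (sinhP p (K * x) / sinhP p (K * (piP p - y))) ^ p := by
    have h := intervalIntegral.integral_comp_sub_left (a := y) (b := piP p)
      (fun u => (sinhP p (K * u) / sinhP p (K * (piP p - y))) ^ p) (piP p)
    simpa using h
  rw [sub₁, sub₂]
  -- integrability after change of variables
  have hG₂int' : IntervalIntegrable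
      (fun x => (K * coshP p (K * x) / sinhP p (K * (piP p - y))) ^ p)
      volume 0 (piP p - y) := by
    apply ContinuousOn.intervalIntegrable
    rw [uIcc_of_le hb2.le]
    exact (PTrigAux.contOn_pow_cosh hp hKpos.le hp0.le).mono (fun t ht => ht.1)
  have hH₂int' : IntervalIntegrable
      (fun x => (sinhP p (K * x) / sinhP p (K * (piP p - y))) ^ p)
      volume 0 (piP p - y) := by
    apply ContinuousOn.intervalIntegrable
    rw [uIcc_of_le hb2.le]
    exact (PTrigAux.contOn_pow_sinh hp hKpos.le hp0.le).mono (fun t ht => ht.1)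
  -- combine each pair via the `piece` lemma
  have t₁ : (∫ x in (0:ℝ)..y, (K * coshP p (K * x) / sinhP p (K * y)) ^ p)
      + (p - 1) * K ^ p * ∫ x in (0:ℝ)..y, (sinhP p (K * x) / sinhP p (K * y)) ^ p
      = K ^ (p - 1) * cothP p (K * y) ^ (p - 1) := by
    rw [← intervalIntegral.integral_const_mul,
      ← intervalIntegral.integral_add hG₁int (hH₁int.const_mul _)]
    exact PTrigAux.piece hp hKpos hy0
  have t₂ : (∫ x in (0:ℝ)..(piP p - y),
        (K * coshP p (K * x) / sinhP p (K * (piP p - y))) ^ p)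
      + (p - 1) * K ^ p * ∫ x in (0:ℝ)..(piP p - y),
        (sinhP p (K * x) / sinhP p (K * (piP p - y))) ^ p
      = K ^ (p - 1) * cothP p (K * (piP p - y)) ^ (p - 1) := by
    rw [← intervalIntegral.integral_const_mul,
      ← intervalIntegral.integral_add hG₂int' (hH₂int'.const_mul _)]
    exact PTrigAux.piece hp hKpos hb2
  have hlam' : lam = -((p - 1) * K ^ p) := by linarith
  rw [hlam']
  linarith [t₁, t₂]
end

section
/- Let 1 < p < ∞ and K > 0. For every y ∈ (0,π_p), (coth_p(Ky))^{p−1} + (coth_p(K(π_p−y)))^{p−1} ≥ 2·(coth_p(K·π_p/2))^{p−1}, with equality if and only if y = π_p/2. -/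
open Set Function Filter MeasureTheory intervalIntegral Real

namespace CothPAux

variable {p : ℝ}

/-- The integrand of `arcsinhP`. -/
noncomputable def F (p t : ℝ) : ℝ := (1 + t ^ p) ^ (-(1 / p))

lemma arcsinhP_eq (p x : ℝ) : arcsinhP p x = ∫ t in (0:ℝ)..x, F p t := rfl

lemma base_pos (hp : 1 < p) {t : ℝ} (ht : 0 ≤ t) : 0 < 1 + t ^ p :=
  lt_of_lt_of_le one_pos (le_add_of_nonneg_right (Real.rpow_nonneg ht p))

lemma F_pos (hp : 1 < p) {t : ℝ} (ht : 0 ≤ t) : 0 < F p t :=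
  Real.rpow_pos_of_pos (base_pos hp ht) _

lemma F_contAt (hp : 1 < p) {t : ℝ} (ht : 0 ≤ t) : ContinuousAt (F p) t := by
  have h1 : ContinuousAt (fun t : ℝ => 1 + t ^ p) t := by
    have : ContinuousAt (fun t : ℝ => t ^ p) t :=
      Real.continuousAt_rpow_const t p (Or.inr (by linarith))
    exact continuousAt_const.add this
  refine ContinuousAt.rpow_const h1 (Or.inl ?_)
  exact ne_of_gt (base_pos hp ht)

lemma F_contOn (hp : 1 < p) : ContinuousOn (F p) (Ici 0) := fun t ht =>
  (F_contAt hp ht).continuousWithinAt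

lemma F_intble (hp : 1 < p) {a b : ℝ} (ha : 0 ≤ a) (hb : 0 ≤ b) :
    IntervalIntegrable (F p) volume a b := by
  apply ContinuousOn.intervalIntegrable
  apply (F_contOn hp).mono
  intro t ht
  exact le_trans (le_min ha hb) ht.1

lemma arcsinhP_zero : arcsinhP p 0 = 0 := integral_same

lemma arcsinhP_add (hp : 1 < p) {x y : ℝ} (hx : 0 ≤ x) (hy : 0 ≤ y) :
    arcsinhP p y = arcsinhP p x + ∫ t in x..y, F p t := by
  rw [arcsinhP_eq, arcsinhP_eq,
    integral_add_adjacent_intervals (F_intble hp le_rfl hx) (F_intble hp hx hy)]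

lemma arcsinhP_strictMonoOn (hp : 1 < p) : StrictMonoOn (arcsinhP p) (Ici 0) := by
  intro x hx y hy hxy
  have h := arcsinhP_add hp (mem_Ici.mp hx) (mem_Ici.mp hy)
  have hpos : 0 < ∫ t in x..y, F p t := by
    apply intervalIntegral_pos_of_pos_on (F_intble hp (mem_Ici.mp hx) (mem_Ici.mp hy))
    · intro t ht
      exact F_pos hp (le_of_lt (lt_of_le_of_lt (mem_Ici.mp hx) ht.1))
    · exact hxy
  linarith

lemma arcsinhP_nonneg (hp : 1 < p) {x : ℝ} (hx : 0 ≤ x) : 0 ≤ arcsinhP p x := by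
  rcases eq_or_lt_of_le hx with h | h
  · rw [← h, arcsinhP_zero]
  · have := arcsinhP_strictMonoOn hp (self_mem_Ici) (mem_Ici.mpr hx) h
    rw [arcsinhP_zero] at this; exact this.le

lemma F_lower (hp : 1 < p) {t : ℝ} (ht : 1 ≤ t) :
    (2:ℝ) ^ (-(1/p)) * t⁻¹ ≤ F p t := by
  have ht0 : (0:ℝ) < t := lt_of_lt_of_le one_pos ht
  have htp : 1 ≤ t ^ p := Real.one_le_rpow ht (by linarith)
  have h2 : 1 + t ^ p ≤ 2 * t ^ p := by linarith
  have hbpos : (0:ℝ) < 2 * t ^ p := by positivity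
  have key : (2 * t ^ p) ^ (-(1/p)) ≤ (1 + t ^ p) ^ (-(1/p)) :=
    Real.rpow_le_rpow_of_nonpos (base_pos hp ht0.le) h2 (by
      have : (0:ℝ) < 1/p := by positivity
      linarith)
  refine le_trans (le_of_eq ?_) key
  rw [Real.mul_rpow (by norm_num) (Real.rpow_nonneg ht0.le p),
    ← Real.rpow_mul ht0.le]
  have hpp : p * -(1/p) = -1 := by field_simp
  rw [hpp, Real.rpow_neg_one]

lemma arcsinhP_tendsto (hp : 1 < p) : Tendsto (arcsinhP p) atTop atTop := by
  have hc : (0:ℝ) < (2:ℝ) ^ (-(1/p)) := Real.rpow_pos_of_pos (by norm_num) _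
  have hlog : Tendsto (fun x : ℝ => arcsinhP p 1 + (2:ℝ) ^ (-(1/p)) * Real.log x)
      atTop atTop := by
    apply tendsto_atTop_add_const_left
    exact (Real.tendsto_log_atTop).const_mul_atTop hc
  apply tendsto_atTop_mono' atTop _ hlog
  filter_upwards [eventually_ge_atTop (1:ℝ)] with x hx
  have h1 : arcsinhP p x = arcsinhP p 1 + ∫ t in (1:ℝ)..x, F p t :=
    arcsinhP_add hp zero_le_one (by linarith)
  have h2 : ∫ t in (1:ℝ)..x, (2:ℝ) ^ (-(1/p)) * t⁻¹ ≤ ∫ t in (1:ℝ)..x, F p t := by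
    apply integral_mono_on hx _ (F_intble hp zero_le_one (by linarith))
    · intro t ht
      exact F_lower hp ht.1
    · apply IntervalIntegrable.const_mul
      apply ContinuousOn.intervalIntegrable
      apply ContinuousOn.inv₀ continuousOn_id
      intro t ht
      rw [uIcc_of_le hx] at ht
      exact ne_of_gt (lt_of_lt_of_le one_pos ht.1)
  have h3 : ∫ t in (1:ℝ)..x, (2:ℝ) ^ (-(1/p)) * t⁻¹
      = (2:ℝ) ^ (-(1/p)) * Real.log x := by
    rw [intervalIntegral.integral_const_mul, integral_inv_of_pos one_pos
      (lt_of_lt_of_le one_pos hx), div_one]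
  rw [h1]; linarith

lemma arcsinhP_surj (hp : 1 < p) {x : ℝ} (hx : 0 ≤ x) :
    ∃ u ∈ Ici (0:ℝ), arcsinhP p u = x := by
  have hev := ((arcsinhP_tendsto hp).eventually_ge_atTop x).and (eventually_ge_atTop (0:ℝ))
  obtain ⟨M, hxM, hM0⟩ := hev.exists
  have hcont : ContinuousOn (arcsinhP p) (Icc 0 M) := by
    have : ContinuousOn (F p) (Icc 0 M) := (F_contOn hp).mono (Icc_subset_Ici_self)
    have hint : IntegrableOn (F p) (uIcc 0 M) volume := by
      rw [uIcc_of_le hM0]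
      exact this.integrableOn_Icc
    have := continuousOn_primitive_interval hint
    rwa [uIcc_of_le hM0] at this
  have hIVT := intermediate_value_Icc hM0 hcont
  have hxmem : x ∈ Icc (arcsinhP p 0) (arcsinhP p M) := by
    rw [arcsinhP_zero]
    exact ⟨hx, hxM⟩
  obtain ⟨u, hu, hu2⟩ := hIVT hxmem
  exact ⟨u, hu.1, hu2⟩

lemma sinhP_nonneg (hp : 1 < p) {x : ℝ} (hx : 0 ≤ x) : 0 ≤ sinhP p x :=
  invFunOn_mem (arcsinhP_surj hp hx)

lemma arcsinhP_sinhP (hp : 1 < p) {x : ℝ} (hx : 0 ≤ x) : arcsinhP p (sinhP p x) = x :=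
  invFunOn_eq (arcsinhP_surj hp hx)

lemma sinhP_arcsinhP (hp : 1 < p) {u : ℝ} (hu : 0 ≤ u) : sinhP p (arcsinhP p u) = u :=
  (arcsinhP_strictMonoOn hp).injOn.leftInvOn_invFunOn hu

lemma sinhP_zero (hp : 1 < p) : sinhP p 0 = 0 := by
  have := sinhP_arcsinhP hp (le_refl (0:ℝ))
  rwa [arcsinhP_zero] at this

lemma sinhP_strictMonoOn (hp : 1 < p) : StrictMonoOn (sinhP p) (Ici 0) := by
  intro x hx y hy hxy
  by_contra h
  push_neg at h
  have : arcsinhP p (sinhP p y) ≤ arcsinhP p (sinhP p x) :=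
    (arcsinhP_strictMonoOn hp).monotoneOn (sinhP_nonneg hp hy) (sinhP_nonneg hp hx) h
  rw [arcsinhP_sinhP hp hx, arcsinhP_sinhP hp hy] at this
  exact absurd hxy (not_lt.mpr this)

lemma sinhP_pos (hp : 1 < p) {x : ℝ} (hx : 0 < x) : 0 < sinhP p x := by
  have := sinhP_strictMonoOn hp self_mem_Ici (mem_Ici.mpr hx.le) hx
  rwa [sinhP_zero hp] at this

lemma sinhP_contAt (hp : 1 < p) {x : ℝ} (hx : 0 < x) : ContinuousAt (sinhP p) x := by
  have hsx := sinhP_pos hp hx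
  rw [ContinuousAt, Metric.tendsto_nhds]
  intro ε hε
  set ε' := min (ε/2) (sinhP p x / 2) with hε'def
  have hε'pos : 0 < ε' := lt_min (by linarith) (by linarith)
  have hε'le : ε' ≤ ε/2 := min_le_left _ _
  have hε'le2 : ε' ≤ sinhP p x / 2 := min_le_right _ _
  set l := sinhP p x - ε' with hl
  set r := sinhP p x + ε' with hr
  have hl0 : 0 ≤ l := by rw [hl]; linarith
  have hr0 : 0 ≤ r := by rw [hr]; linarith
  have hAl : arcsinhP p l < x := by
    have := arcsinhP_strictMonoOn hp (mem_Ici.mpr hl0) (mem_Ici.mpr hsx.le)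
      (by rw [hl]; linarith)
    rwa [arcsinhP_sinhP hp hx.le] at this
  have hAr : x < arcsinhP p r := by
    have := arcsinhP_strictMonoOn hp (mem_Ici.mpr hsx.le) (mem_Ici.mpr hr0)
      (by rw [hr]; linarith)
    rwa [arcsinhP_sinhP hp hx.le] at this
  filter_upwards [Ioo_mem_nhds hAl hAr] with t ht
  have ht0 : 0 ≤ t := le_trans (arcsinhP_nonneg hp hl0) ht.1.le
  have h1 : l < sinhP p t := by
    by_contra h
    push_neg at h
    have := (arcsinhP_strictMonoOn hp).monotoneOn (sinhP_nonneg hp ht0) (mem_Ici.mpr hl0) h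
    rw [arcsinhP_sinhP hp ht0] at this
    linarith [ht.1]
  have h2 : sinhP p t < r := by
    by_contra h
    push_neg at h
    have := (arcsinhP_strictMonoOn hp).monotoneOn (mem_Ici.mpr hr0) (sinhP_nonneg hp ht0) h
    rw [arcsinhP_sinhP hp ht0] at this
    linarith [ht.2]
  rw [Real.dist_eq, abs_lt]
  constructor
  · rw [hl] at h1; linarith
  · rw [hr] at h2; linarith

lemma arcsinhP_hasDerivAt (hp : 1 < p) {u : ℝ} (hu : 0 < u) :
    HasDerivAt (arcsinhP p) (F p u) u :=
  integral_hasDerivAt_right (F_intble hp le_rfl hu.le)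
    (ContinuousAt.stronglyMeasurableAtFilter isOpen_Ioi
      (fun t ht => F_contAt hp (le_of_lt ht)) u hu)
    (F_contAt hp hu.le)

lemma sinhP_hasDerivAt (hp : 1 < p) {x : ℝ} (hx : 0 < x) :
    HasDerivAt (sinhP p) ((1 + sinhP p x ^ p) ^ (1/p)) x := by
  have hsx := sinhP_pos hp hx
  have hA := arcsinhP_hasDerivAt hp hsx
  have hne : F p (sinhP p x) ≠ 0 := ne_of_gt (F_pos hp hsx.le)
  have hfg : ∀ᶠ t in nhds x, arcsinhP p (sinhP p t) = t := by
    filter_upwards [Ioi_mem_nhds hx] with t ht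
    exact arcsinhP_sinhP hp (le_of_lt ht)
  have h := HasDerivAt.of_local_left_inverse (sinhP_contAt hp hx) hA hne hfg
  refine h.congr_deriv (Eq.symm ?_)
  rw [F, ← Real.rpow_neg (base_pos hp hsx.le).le]
  rw [neg_neg]

/-- The model function `ψ` with `φ = ψ ∘ sinhP`. -/
noncomputable def psi (p u : ℝ) : ℝ := (1 + u ^ p) ^ ((p-1)/p) * u ^ (1-p)

lemma psi_hasDerivAt (hp : 1 < p) {u : ℝ} (hu : 0 < u) :
    HasDerivAt (psi p) (-(p-1) * u^(-p) * (1 + u^p)^(-(1/p))) u := by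
  have hp0 : (0:ℝ) < p := by linarith
  have hb := base_pos hp hu.le
  have h1 : HasDerivAt (fun v : ℝ => v ^ p) (p * u^(p-1)) u :=
    Real.hasDerivAt_rpow_const (Or.inl hu.ne')
  have h2 : HasDerivAt (fun v : ℝ => 1 + v^p) (p * u^(p-1)) u := h1.const_add 1
  have h3 := h2.rpow_const (p := (p-1)/p) (Or.inl hb.ne')
  have h4 : HasDerivAt (fun v : ℝ => v ^ (1-p)) ((1-p) * u^(1-p-1)) u :=
    Real.hasDerivAt_rpow_const (Or.inl hu.ne')
  have h5 := h3.mul h4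
  refine h5.congr_deriv (Eq.symm ?_)
  have e1 : (p-1)/p - 1 = -(1/p) := by field_simp; ring
  have e2 : (1:ℝ) - p - 1 = -p := by ring
  have e3 : (1 + u^p)^((p-1)/p) = (1 + u^p) * (1 + u^p)^(-(1/p)) := by
    have h : (p-1)/p = 1 + -(1/p) := by field_simp; ring
    rw [h, Real.rpow_add hb, Real.rpow_one]
  have e0 : p * u^(p-1) * ((p-1)/p) = (p-1) * u^(p-1) := by
    field_simp
  rw [e1, e2, e3, e0]
  have e4 : u^(p-1) * u^(1-p) = 1 := by
    rw [← Real.rpow_add hu]; norm_num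
  have e5 : u^p * u^(-p) = 1 := by
    rw [← Real.rpow_add hu]; norm_num
  linear_combination ((1-p) * (1 + u^p)^(-(1/p))) * e4 +
    ((p-1) * (1 + u^p)^(-(1/p))) * e5

lemma cothpow_eventuallyEq (hp : 1 < p) {x : ℝ} (hx : 0 < x) :
    (fun t => cothP p t ^ (p-1)) =ᶠ[nhds x] fun t => psi p (sinhP p t) := by
  filter_upwards [Ioi_mem_nhds hx] with t ht
  have hst : 0 < sinhP p t := sinhP_pos hp ht
  have hb := base_pos hp hst.le
  show cothP p t ^ (p-1) = _
  rw [cothP, coshP, psi]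
  rw [Real.div_rpow (Real.rpow_nonneg hb.le _) hst.le,
    ← Real.rpow_mul hb.le]
  have h : 1/p*(p-1) = (p-1)/p := by ring
  rw [h, div_eq_mul_inv, ← Real.rpow_neg hst.le]
  norm_num

lemma phi_hasDerivAt (hp : 1 < p) {x : ℝ} (hx : 0 < x) :
    HasDerivAt (fun t => cothP p t ^ (p-1)) (-(p-1) * (sinhP p x)^(-p)) x := by
  have hst := sinhP_pos hp hx
  have hψ := psi_hasDerivAt hp hst
  have hs := sinhP_hasDerivAt hp hx
  have hcomp := HasDerivAt.comp x hψ hs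
  have heq := cothpow_eventuallyEq hp hx
  have h := hcomp.congr_of_eventuallyEq heq
  refine h.congr_deriv (Eq.symm ?_)
  have hb := base_pos hp hst.le
  rw [mul_assoc, mul_assoc, ← Real.rpow_add hb]
  norm_num

lemma phi_strictConvexOn (hp : 1 < p) :
    StrictConvexOn ℝ (Ioi 0) (fun t => cothP p t ^ (p-1)) := by
  apply StrictMonoOn.strictConvexOn_of_deriv (convex_Ioi 0)
  · intro x hx
    exact (phi_hasDerivAt hp hx).continuousAt.continuousWithinAt
  · rw [interior_Ioi]
    intro x hx y hy hxy
    rw [(phi_hasDerivAt hp hx).deriv, (phi_hasDerivAt hp hy).deriv]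
    have hsx := sinhP_pos hp hx
    have hss : sinhP p x < sinhP p y :=
      sinhP_strictMonoOn hp (mem_Ici.mpr (le_of_lt hx)) (mem_Ici.mpr (le_of_lt hy)) hxy
    have h := Real.rpow_lt_rpow_of_neg hsx hss (show -p < 0 by linarith)
    have := mul_lt_mul_of_neg_left h (show -(p-1) < 0 by linarith)
    linarith

end CothPAux


open CothPAux
/-- For `K > 0` and `y ∈ (0, π_p)`,
`(coth_p (K y))^(p-1) + (coth_p (K(π_p - y)))^(p-1) ≥ 2 (coth_p (K π_p/2))^(p-1)`,
with equality if and only if `y = π_p/2`. -/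
theorem cothP_convexity_ineq (p K : ℝ) (hp : 1 < p) (hK : 0 < K) :
    ∀ y ∈ Set.Ioo (0:ℝ) (piP p),
      (cothP p (K * y)) ^ (p - 1) + (cothP p (K * (piP p - y))) ^ (p - 1) ≥
        2 * (cothP p (K * piP p / 2)) ^ (p - 1) ∧
      ((cothP p (K * y)) ^ (p - 1) + (cothP p (K * (piP p - y))) ^ (p - 1) =
        2 * (cothP p (K * piP p / 2)) ^ (p - 1) ↔ y = piP p / 2) := by
  intro y hy
  obtain ⟨hy0, hyp⟩ := hy
  have hconv := phi_strictConvexOn hp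
  have ha : K * y ∈ Set.Ioi (0:ℝ) := mul_pos hK hy0
  have hb : K * (piP p - y) ∈ Set.Ioi (0:ℝ) := mul_pos hK (by linarith)
  by_cases hy2 : y = piP p / 2
  · subst hy2
    have e1 : K * (piP p - piP p / 2) = K * piP p / 2 := by ring
    have e2 : K * (piP p / 2) = K * piP p / 2 := by ring
    rw [e1, e2]
    exact ⟨le_of_eq (by ring), ⟨fun _ => rfl, fun _ => by ring⟩⟩
  · have hab : K * y ≠ K * (piP p - y) := by
      intro h
      have := mul_left_cancel₀ (ne_of_gt hK) h
      apply hy2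
      linarith
    have h := hconv.2 ha hb hab (show (0:ℝ) < 1/2 by norm_num)
      (show (0:ℝ) < 1/2 by norm_num) (by norm_num)
    have hmid : (1/2:ℝ) • (K * y) + (1/2:ℝ) • (K * (piP p - y)) = K * piP p / 2 := by
      simp only [smul_eq_mul]; ring
    rw [hmid] at h
    simp only [smul_eq_mul] at h
    constructor
    · linarith
    · constructor
      · intro heq; exfalso; linarith
      · intro h'; exact absurd h' hy2
end
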